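/- arXiv:1712.04587 — 2 statements merged into one kernel-verified Lean document; each statement's English description precedes it below -/
import Mathlib

section
/- Let A be an artin algebra and 0 → N → M → L → 0 a short exact sequence of finitely generated A-modules. If N and L are Gorenstein-projective, then M is Gorenstein-projective. -/
universe u

open Function LinearMap

/-- An unbounded cochain complex of `A`-modules, given by plain data. -/
structure ZComplex (A : Type u) [Ring A] where
  P : ℤ → ModuleCat.{u} A
  d : ∀ n : ℤ, P n →ₗ[A] P (n + 1)
  comp_eq_zero : ∀ (n : ℤ) (x : P n), d (n + 1) (d n x) = 0

namespace ZComplex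

variable {A : Type u} [Ring A]

/-- All terms are projective. -/
def IsProj (C : ZComplex A) : Prop := ∀ n, Module.Projective A (C.P n)

/-- All terms are finitely generated. -/
def IsFG (C : ZComplex A) : Prop := ∀ n, Module.Finite A (C.P n)

/-- The complex is exact (acyclic). -/
def Acyclic (C : ZComplex A) : Prop := ∀ n : ℤ, Function.Exact (C.d n) (C.d (n + 1))

/-- The complex `Hom_A(C, A)` is exact. -/
def DualAcyclic (C : ZComplex A) : Prop :=
  ∀ n : ℤ, Function.Exact
    (fun g : C.P (n + 1 + 1) →ₗ[A] A => g ∘ₗ C.d (n + 1))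
    (fun f : C.P (n + 1) →ₗ[A] A => f ∘ₗ C.d n)

end ZComplex

namespace GPAux

variable {A : Type u} [Ring A]

/-- A finitely generated projective module is a retract of a finite free module. -/
lemma exists_retract (Q : Type u) [AddCommGroup Q] [Module A Q] [Module.Finite A Q]
    (hQ : Module.Projective A Q) :
    ∃ (k : ℕ) (s : Q →ₗ[A] (Fin k → A)) (r : (Fin k → A) →ₗ[A] Q), ∀ q, r (s q) = q := by
  obtain ⟨k, v, hv⟩ := Module.Finite.exists_fin (R := A) (M := Q)
  let r : (Fin k → A) →ₗ[A] Q :=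
    { toFun := fun c => ∑ i, c i • v i
      map_add' := by intro c c'; simp [add_smul, Finset.sum_add_distrib]
      map_smul' := by intro a c; simp [mul_smul, Finset.smul_sum]
      }
  have hr : Function.Surjective r := by
    intro q
    have hq : q ∈ Submodule.span A (Set.range v) := hv ▸ Submodule.mem_top
    rw [Submodule.mem_span_range_iff_exists_fun] at hq
    obtain ⟨c, hc⟩ := hq
    exact ⟨c, hc⟩
  haveI := hQ
  obtain ⟨s, hs⟩ := Module.projective_lifting_property r LinearMap.id hr
  exact ⟨k, s, r, fun q => congrArg (fun m => m q) hs |>.trans rfl⟩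

/-- Key lifting lemma from dual acyclicity, with target any f.g. projective. -/
lemma keyLift {D : ZComplex A} (hD : D.DualAcyclic) {Q : Type u} [AddCommGroup Q] [Module A Q]
    [Module.Finite A Q] (hQ : Module.Projective A Q) (m : ℤ)
    (β : D.P m →ₗ[A] Q) (hβ : ∀ x, D.d m x = 0 → β x = 0) :
    ∃ γ : D.P (m + 1) →ₗ[A] Q, ∀ x, γ (D.d m x) = β x := by
  obtain ⟨m', rfl⟩ : ∃ m', m = m' + 1 := ⟨m - 1, by ring⟩
  obtain ⟨k, s, r, hrs⟩ := exists_retract Q hQ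
  have hcoord : ∀ i : Fin k, ∃ gi : D.P (m' + 1 + 1) →ₗ[A] A,
      gi ∘ₗ D.d (m' + 1) = (LinearMap.proj i) ∘ₗ (s ∘ₗ β) := by
    intro i
    have h0 : ((LinearMap.proj i : (Fin k → A) →ₗ[A] A) ∘ₗ (s ∘ₗ β)) ∘ₗ D.d m' = 0 := by
      ext x
      simp [hβ (D.d m' x) (D.comp_eq_zero m' x)]
    exact (hD m' _).mp h0
  choose gi hgi using hcoord
  refine ⟨r ∘ₗ LinearMap.pi gi, ?_⟩
  intro x
  have h1 : (fun i => gi i (D.d (m' + 1) x)) = s (β x) := by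
    funext i
    exact congrArg (fun (m : _ →ₗ[A] A) => m x) (hgi i)
  show r (LinearMap.pi gi (D.d (m' + 1) x)) = β x
  have : LinearMap.pi gi (D.d (m' + 1) x) = s (β x) := h1
  rw [this, hrs]

/-- Extend a map off the cocycle submodule. -/
lemma keyLiftKer {D : ZComplex A} (hD : D.DualAcyclic) (hDa : D.Acyclic)
    {Q : Type u} [AddCommGroup Q] [Module A Q] [Module.Finite A Q]
    (hQ : Module.Projective A Q) (m : ℤ)
    (e : ↥(LinearMap.ker (D.d (m + 1))) →ₗ[A] Q) :
    ∃ E : D.P (m + 1) →ₗ[A] Q, ∀ z : ↥(LinearMap.ker (D.d (m + 1))), E z.1 = e z := by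
  have hmem : ∀ x : D.P m, D.d m x ∈ LinearMap.ker (D.d (m + 1)) := by
    intro x; exact LinearMap.mem_ker.mpr (D.comp_eq_zero m x)
  let β : D.P m →ₗ[A] Q := e ∘ₗ ((D.d m).codRestrict (LinearMap.ker (D.d (m + 1))) hmem)
  have hβ : ∀ x, D.d m x = 0 → β x = 0 := by
    intro x hx
    show e ⟨D.d m x, hmem x⟩ = 0
    have : (⟨D.d m x, hmem x⟩ : ↥(LinearMap.ker (D.d (m + 1)))) = 0 := Subtype.ext hx
    rw [this, map_zero]
  obtain ⟨γ, hγ⟩ := keyLift hD hQ m β hβ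
  refine ⟨γ, ?_⟩
  intro z
  obtain ⟨x, hx⟩ := (hDa m z.1).mp z.2
  have : z = ⟨D.d m x, hmem x⟩ := Subtype.ext hx.symm
  rw [this]
  exact hγ x

/-- Lift through an acyclic complex using projectivity of the source. -/
lemma projLift {C : ZComplex A} (hCa : C.Acyclic) {P : Type u} [AddCommGroup P] [Module A P]
    (hP : Module.Projective A P) (m : ℤ) (β : P →ₗ[A] C.P (m + 1 + 1))
    (hβ : ∀ x, C.d (m + 1 + 1) (β x) = 0) :
    ∃ l : P →ₗ[A] C.P (m + 1), ∀ x, C.d (m + 1) (l x) = β x := by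
  haveI := hP
  have hmem : ∀ x : P, β x ∈ LinearMap.range (C.d (m + 1)) := by
    intro x
    obtain ⟨y, hy⟩ := (hCa (m + 1) (β x)).mp (hβ x)
    exact ⟨y, hy⟩
  let β' : P →ₗ[A] ↥(LinearMap.range (C.d (m + 1))) := β.codRestrict _ hmem
  obtain ⟨l, hl⟩ := Module.projective_lifting_property
    ((C.d (m + 1)).rangeRestrict) β' (LinearMap.surjective_rangeRestrict _)
  refine ⟨l, fun x => ?_⟩
  have := congrArg (fun (m' : P →ₗ[A] ↥(LinearMap.range (C.d (m + 1)))) => (m' x).1) hl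
  simpa [β'] using this

end GPAux

namespace GPAux

variable {A : Type u} [Ring A]

/-- The positive (coresolution) side of the horseshoe construction. -/
lemma pos_chain {C D : ZComplex A} (hD : D.DualAcyclic) (hDa : D.Acyclic)
    (hCfg : C.IsFG) (hCproj : C.IsProj)
    (δ0 : D.P 0 →ₗ[A] C.P (0 + 1))
    (hInv0 : ∀ y, D.d 0 y = 0 → C.d (0 + 1) (δ0 y) = 0) :
    ∃ δp : ∀ k : ℕ, D.P (k : ℤ) →ₗ[A] C.P ((k : ℤ) + 1),
      δp 0 = δ0 ∧
      ∀ (k : ℕ) (y : D.P (k : ℤ)),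
        δp (k + 1) (D.d (k : ℤ) y) = -(C.d ((k : ℤ) + 1) (δp k y)) := by
  classical
  haveI : ∀ n : ℤ, Module.Finite A (C.P n) := hCfg
  have hβ0 : ∀ y, D.d (0 : ℤ) y = 0 → (-(C.d ((0 : ℤ) + 1) ∘ₗ δ0)) y = 0 := by
    intro y hy
    show -(C.d ((0 : ℤ) + 1) (δ0 y)) = 0
    rw [hInv0 y hy, neg_zero]
  have hβs : ∀ (k : ℕ)
      (p : { p : (D.P (k : ℤ) →ₗ[A] C.P ((k : ℤ) + 1)) ×
          (D.P ((k : ℤ) + 1) →ₗ[A] C.P ((k : ℤ) + 1 + 1)) //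
        ∀ y, p.2 (D.d (k : ℤ) y) = -(C.d ((k : ℤ) + 1) (p.1 y)) }),
      ∀ y, D.d ((k : ℤ) + 1) y = 0 → (-(C.d ((k : ℤ) + 1 + 1) ∘ₗ p.1.2)) y = 0 := by
    intro k p y hy
    obtain ⟨z, hz⟩ := (hDa (k : ℤ) y).mp hy
    show -(C.d ((k : ℤ) + 1 + 1) (p.1.2 y)) = 0
    rw [← hz, p.2 z, map_neg, C.comp_eq_zero, neg_zero, neg_zero]
  let T : ℕ → Type u := fun k =>
    { p : (D.P (k : ℤ) →ₗ[A] C.P ((k : ℤ) + 1)) ×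
          (D.P ((k : ℤ) + 1) →ₗ[A] C.P ((k : ℤ) + 1 + 1)) //
      ∀ y, p.2 (D.d (k : ℤ) y) = -(C.d ((k : ℤ) + 1) (p.1 y)) }
  let hbase : T 0 :=
    let h := keyLift hD (hCproj ((0 : ℤ) + 1 + 1)) (0 : ℤ)
      (-(C.d ((0 : ℤ) + 1) ∘ₗ δ0)) hβ0
    ⟨⟨δ0, h.choose⟩, fun y => h.choose_spec y⟩
  let hstep : ∀ k : ℕ, T k → T (k + 1) := fun k p =>
    let h := keyLift hD (hCproj ((k : ℤ) + 1 + 1 + 1)) ((k : ℤ) + 1)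
      (-(C.d ((k : ℤ) + 1 + 1) ∘ₗ p.1.2)) (hβs k p)
    ⟨⟨p.1.2, h.choose⟩, fun y => h.choose_spec y⟩
  let F : ∀ k : ℕ, T k := fun k => Nat.rec hbase hstep k
  refine ⟨fun k => (F k).1.1, rfl, ?_⟩
  intro k y
  have hcompat : (F (k + 1)).1.1 = (F k).1.2 := rfl
  rw [show ((fun k => (F k).1.1) (k+1)) = (F k).1.2 from hcompat]
  exact (F k).2 y

/-- The negative (resolution) side of the horseshoe construction. -/
lemma neg_chain {C D : ZComplex A} (hCa : C.Acyclic) (hDproj : D.IsProj)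
    (δ0 : D.P 0 →ₗ[A] C.P (0 + 1))
    (hInv0 : ∀ y, D.d 0 y = 0 → C.d (0 + 1) (δ0 y) = 0) :
    ∃ δm : ∀ j : ℕ, D.P (Int.negSucc j) →ₗ[A] C.P (Int.negSucc j + 1),
      (∀ y, C.d (Int.negSucc 0 + 1) (δm 0 y) = -(δ0 (D.d (Int.negSucc 0) y))) ∧
      ∀ (j : ℕ) (y : D.P (Int.negSucc (j + 1))),
        C.d (Int.negSucc (j + 1) + 1) (δm (j + 1) y) = -(δm j (D.d (Int.negSucc (j + 1)) y)) := by
  classical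
  have hβ0 : ∀ x, C.d (Int.negSucc 0 + 1 + 1) ((-(δ0 ∘ₗ D.d (Int.negSucc 0))) x) = 0 := by
    intro x
    show C.d ((0 : ℤ) + 1) (-(δ0 (D.d (Int.negSucc 0) x))) = 0
    rw [map_neg, hInv0 _ (D.comp_eq_zero (Int.negSucc 0) x), neg_zero]
  have hβs : ∀ (j : ℕ)
      (p : { p : (D.P (Int.negSucc j) →ₗ[A] C.P (Int.negSucc j + 1)) ×
          (D.P (Int.negSucc j + 1) →ₗ[A] C.P (Int.negSucc j + 1 + 1)) //
        ∀ y, C.d (Int.negSucc j + 1) (p.1 y) = -(p.2 (D.d (Int.negSucc j) y)) }),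
      ∀ x, C.d (Int.negSucc (j + 1) + 1 + 1)
        ((-(p.1.1 ∘ₗ D.d (Int.negSucc (j + 1)))) x) = 0 := by
    intro j p x
    show C.d (Int.negSucc j + 1) (-(p.1.1 (D.d (Int.negSucc (j + 1)) x))) = 0
    rw [map_neg, p.2]
    have h0 : D.d (Int.negSucc j) (D.d (Int.negSucc (j + 1)) x) = 0 :=
      D.comp_eq_zero (Int.negSucc (j + 1)) x
    rw [h0, map_zero, neg_zero, neg_zero]
  let T : ℕ → Type u := fun j =>
    { p : (D.P (Int.negSucc j) →ₗ[A] C.P (Int.negSucc j + 1)) ×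
          (D.P (Int.negSucc j + 1) →ₗ[A] C.P (Int.negSucc j + 1 + 1)) //
      ∀ y, C.d (Int.negSucc j + 1) (p.1 y) = -(p.2 (D.d (Int.negSucc j) y)) }
  let hbase : T 0 :=
    let h := projLift hCa (hDproj (Int.negSucc 0)) (Int.negSucc 0)
      (-(δ0 ∘ₗ D.d (Int.negSucc 0))) hβ0
    ⟨⟨h.choose, δ0⟩, fun y => h.choose_spec y⟩
  let hstep : ∀ j : ℕ, T j → T (j + 1) := fun j p =>
    let h := projLift hCa (hDproj (Int.negSucc (j + 1))) (Int.negSucc (j + 1))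
      (-(p.1.1 ∘ₗ D.d (Int.negSucc (j + 1)))) (hβs j p)
    ⟨⟨h.choose, p.1.1⟩, fun y => h.choose_spec y⟩
  let F : ∀ j : ℕ, T j := fun j => Nat.rec hbase hstep j
  refine ⟨fun j => (F j).1.1, ?_, ?_⟩
  · intro y
    have h0 : (F 0).1.2 = δ0 := rfl
    have := (F 0).2 y
    rw [h0] at this
    exact this
  · intro j y
    have hcompat : (F (j + 1)).1.2 = (F j).1.1 := rfl
    have := (F (j + 1)).2 y
    rw [hcompat] at this
    exact this

end GPAux

namespace GPAux

variable {A : Type u} [Ring A]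

/-- Glue the positive and negative chains into a full family of connecting maps. -/
lemma full_delta {C D : ZComplex A} (hD : D.DualAcyclic) (hDa : D.Acyclic) (hCa : C.Acyclic)
    (hCfg : C.IsFG) (hCproj : C.IsProj) (hDproj : D.IsProj)
    (δ0 : D.P 0 →ₗ[A] C.P (0 + 1))
    (hInv0 : ∀ y, D.d 0 y = 0 → C.d (0 + 1) (δ0 y) = 0) :
    ∃ δ : ∀ n : ℤ, D.P n →ₗ[A] C.P (n + 1),
      δ 0 = δ0 ∧
      ∀ (n : ℤ) (y : D.P n), C.d (n + 1) (δ n y) + δ (n + 1) (D.d n y) = 0 := by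
  obtain ⟨δp, hδp0, hpos⟩ := pos_chain hD hDa hCfg hCproj δ0 hInv0
  obtain ⟨δm, hneg0, hneg⟩ := neg_chain hCa hDproj δ0 hInv0
  let Δ : ∀ n : ℤ, D.P n →ₗ[A] C.P (n + 1) := fun n =>
    match n with
    | .ofNat k => δp k
    | .negSucc j => δm j
  refine ⟨Δ, hδp0, ?_⟩
  intro n y
  cases n with
  | ofNat k =>
    have h : Δ (Int.ofNat k + 1) (D.d (Int.ofNat k) y)
        = -(C.d (Int.ofNat k + 1) (Δ (Int.ofNat k) y)) := hpos k y
    rw [h]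
    exact add_neg_cancel _
  | negSucc j =>
    cases j with
    | zero =>
      have h2 : Δ (Int.negSucc 0 + 1) (D.d (Int.negSucc 0) y)
          = δ0 (D.d (Int.negSucc 0) y) :=
        DFunLike.congr_fun hδp0 (D.d (Int.negSucc 0) y)
      have h : C.d (Int.negSucc 0 + 1) (Δ (Int.negSucc 0) y)
          = -(Δ (Int.negSucc 0 + 1) (D.d (Int.negSucc 0) y)) := by
        rw [h2]; exact hneg0 y
      rw [h]
      exact neg_add_cancel _
    | succ j =>
      have h : C.d (Int.negSucc (j + 1) + 1) (Δ (Int.negSucc (j + 1)) y)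
          = -(Δ (Int.negSucc (j + 1) + 1) (D.d (Int.negSucc (j + 1)) y)) := hneg j y
      rw [h]
      exact neg_add_cancel _

end GPAux

namespace GPAux

variable {A : Type u} [Ring A]

/-- Maps from `N` to a f.g. projective extend along `f : N ↪ M` when the cokernel `L`
is the zeroth cocycle of a totally acyclic complex. -/
lemma ext_lemma {D : ZComplex A} (hDd : D.DualAcyclic) (hDa : D.Acyclic) (hDproj : D.IsProj)
    {N M L : Type u} [AddCommGroup N] [Module A N] [AddCommGroup M] [Module A M]
    [AddCommGroup L] [Module A L]
    (f : N →ₗ[A] M) (g : M →ₗ[A] L) (hf : Function.Injective f)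
    (hg : Function.Surjective g) (hfg : Function.Exact f g)
    (ψ : ↥(LinearMap.ker (D.d 0)) ≃ₗ[A] L)
    {Q : Type u} [AddCommGroup Q] [Module A Q] [Module.Finite A Q]
    (hQ : Module.Projective A Q) (h : N →ₗ[A] Q) :
    ∃ σ : M →ₗ[A] Q, ∀ n, σ (f n) = h n := by
  classical
  have hq0mem : ∀ x : D.P (Int.negSucc 0), D.d (Int.negSucc 0) x ∈ LinearMap.ker (D.d 0) :=
    fun x => LinearMap.mem_ker.mpr (D.comp_eq_zero (Int.negSucc 0) x)
  let q0 : D.P (Int.negSucc 0) →ₗ[A] ↥(LinearMap.ker (D.d 0)) :=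
    (D.d (Int.negSucc 0)).codRestrict _ hq0mem
  have hq0surj : Function.Surjective q0 := by
    intro z
    obtain ⟨x, hx⟩ := (hDa (Int.negSucc 0) z.1).mp (LinearMap.mem_ker.mp z.2)
    exact ⟨x, Subtype.ext hx⟩
  haveI := hDproj (Int.negSucc 0)
  let q : D.P (Int.negSucc 0) →ₗ[A] L := ψ.toLinearMap ∘ₗ q0
  have hqsurj : Function.Surjective q := by
    intro l
    obtain ⟨z, hz⟩ := hq0surj (ψ.symm l)
    exact ⟨z, by show ψ (q0 z) = l; rw [hz, ψ.apply_symm_apply]⟩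
  obtain ⟨v, hv⟩ := Module.projective_lifting_property g q hg
  have hv' : ∀ x, g (v x) = q x := fun x => DFunLike.congr_fun hv x
  have hvd : ∀ x : D.P (Int.negSucc 1), g (v (D.d (Int.negSucc 1) x)) = 0 := by
    intro x
    have h0 : q0 (D.d (Int.negSucc 1) x) = 0 := Subtype.ext (D.comp_eq_zero (Int.negSucc 1) x)
    rw [hv' _]
    show ψ (q0 (D.d (Int.negSucc 1) x)) = 0
    rw [h0, map_zero]
  have hmemf : ∀ x, v (D.d (Int.negSucc 1) x) ∈ LinearMap.range f :=
    fun x => LinearMap.mem_range.mpr ((hfg _).mp (hvd x))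
  let eqf := LinearEquiv.ofInjective f hf
  let w : D.P (Int.negSucc 1) →ₗ[A] N :=
    eqf.symm.toLinearMap ∘ₗ ((v ∘ₗ D.d (Int.negSucc 1)).codRestrict (LinearMap.range f) hmemf)
  have hfw : ∀ x, f (w x) = v (D.d (Int.negSucc 1) x) := by
    intro x
    have h1 : eqf (w x) = ⟨v (D.d (Int.negSucc 1) x), hmemf x⟩ := eqf.apply_symm_apply _
    have h2 := congrArg Subtype.val h1
    rwa [LinearEquiv.ofInjective_apply] at h2
  have hβw : ∀ x, D.d (Int.negSucc 1) x = 0 → (h ∘ₗ w) x = 0 := by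
    intro x hx
    have hfx : f (w x) = 0 := by rw [hfw x, hx, map_zero]
    have hw0 : w x = 0 := hf (by rw [hfx, map_zero])
    show h (w x) = 0
    rw [hw0, map_zero]
  obtain ⟨γ, hγ⟩ := keyLift hDd hQ (Int.negSucc 1) (h ∘ₗ w) hβw
  -- γ : D.P (negSucc 0) →ₗ Q with γ (D.d (negSucc 1) x) = h (w x)
  let u : (↥(D.P (Int.negSucc 0)) × N) →ₗ[A] M :=
    v ∘ₗ (LinearMap.fst A _ _) + f ∘ₗ (LinearMap.snd A _ _)
  have hu : ∀ z : ↥(D.P (Int.negSucc 0)) × N, u z = v z.1 + f z.2 := fun z => rfl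
  have husurj : Function.Surjective u := by
    intro m
    obtain ⟨x, hx⟩ := hqsurj (g m)
    have h0 : g (m - v x) = 0 := by rw [map_sub, hv' x, hx, sub_self]
    obtain ⟨n, hn⟩ := (hfg _).mp h0
    refine ⟨(x, n), ?_⟩
    rw [hu]
    show v x + f n = m
    rw [hn]
    abel
  let σ0 : (↥(D.P (Int.negSucc 0)) × N) →ₗ[A] Q :=
    γ ∘ₗ (LinearMap.fst A _ _) + h ∘ₗ (LinearMap.snd A _ _)
  have hσ0 : ∀ z : ↥(D.P (Int.negSucc 0)) × N, σ0 z = γ z.1 + h z.2 := fun z => rfl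
  have hker : LinearMap.ker u ≤ LinearMap.ker σ0 := by
    rintro ⟨x, n⟩ hz
    have hz' : v x + f n = 0 := LinearMap.mem_ker.mp hz
    have hgv : g (v x) = 0 := by
      have h1 : g (v x) + g (f n) = 0 := by rw [← map_add, hz', map_zero]
      have hgf : g (f n) = 0 := (hfg (f n)).mpr ⟨n, rfl⟩
      rwa [hgf, add_zero] at h1
    have hq0x : q0 x = 0 := by
      have h1 : ψ (q0 x) = 0 := by
        have : q x = 0 := by rw [← hv' x]; exact hgv
        exact this
      have := congrArg ψ.symm h1
      rwa [ψ.symm_apply_apply, map_zero] at this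
    have hdx : D.d (Int.negSucc 0) x = 0 := congrArg Subtype.val hq0x
    obtain ⟨z', hz''⟩ := (hDa (Int.negSucc 1) x).mp hdx
    have hfn : f n = f (-(w z')) := by
      rw [map_neg, hfw z', hz'']
      have : f n = -(v x) := by
        have := hz'
        rw [add_comm] at this
        exact (add_eq_zero_iff_eq_neg.mp this)
      exact this
    have hn : n = -(w z') := hf hfn
    rw [LinearMap.mem_ker, hσ0]
    show γ x + h n = 0
    rw [hn, ← hz'', hγ z']
    show h (w z') + h (-(w z')) = 0
    rw [map_neg]
    exact add_neg_cancel _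
  let eqv := u.quotKerEquivOfSurjective husurj
  let σ : M →ₗ[A] Q := ((LinearMap.ker u).liftQ σ0 hker) ∘ₗ eqv.symm.toLinearMap
  have heqv : ∀ z, eqv (Submodule.Quotient.mk z) = u z := fun z => rfl
  have hσu : ∀ z, σ (u z) = σ0 z := by
    intro z
    have h1 : eqv.symm (u z) = Submodule.Quotient.mk z := by
      apply eqv.injective
      rw [eqv.apply_symm_apply, heqv]
    show ((LinearMap.ker u).liftQ σ0 hker) (eqv.symm (u z)) = σ0 z
    rw [h1]
    rfl
  refine ⟨σ, fun n => ?_⟩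
  have h1 : f n = u (0, n) := by rw [hu]; show f n = v 0 + f n; rw [map_zero, zero_add]
  rw [h1, hσu, hσ0]
  show γ 0 + h n = h n
  rw [map_zero, zero_add]

end GPAux


variable (A : Type u) [Ring A]

/-- A finitely generated module is Gorenstein-projective if it is the zeroth cocycle
of a totally acyclic complex of finitely generated projective modules. -/
def IsGProj (M : Type u) [AddCommGroup M] [Module A M] : Prop :=
  ∃ C : ZComplex A, C.IsProj ∧ C.IsFG ∧ C.Acyclic ∧ C.DualAcyclic ∧
    Nonempty (↥(LinearMap.ker (C.d 0)) ≃ₗ[A] M)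

/-- An augmented projective resolution `⋯ → Q 2 → Q 1 → Q 0 ≅ M → 0`.
Here `Q (n+1)` is the `n`-th term of the resolution proper. -/
structure AugProjRes (M : Type u) [AddCommGroup M] [Module A M] where
  Q : ℕ → ModuleCat.{u} A
  d : ∀ n : ℕ, Q (n + 1) →ₗ[A] Q n
  iso : ↥(Q 0) ≃ₗ[A] M
  proj : ∀ n, Module.Projective A (Q (n + 1))
  surj : Function.Surjective (d 0)
  exact : ∀ n, Function.Exact (d (n + 1)) (d n)

/-- `Ext_A^i(M, N) = 0`, expressed (for `i ≥ 1`) as exactness of the `Hom` complex of any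
projective resolution of `M` at the `i`-th spot. -/
def ExtVanish (M : Type u) [AddCommGroup M] [Module A M]
    (N : Type u) [AddCommGroup N] [Module A N] (i : ℕ) : Prop :=
  ∀ R : AugProjRes A M,
    Function.Exact
      (fun g : R.Q i →ₗ[A] N => g ∘ₗ R.d i)
      (fun g : R.Q (i + 1) →ₗ[A] N => g ∘ₗ R.d (i + 1))

/-- `M` has projective dimension at most `n`. -/
def ProjDimLE (M : Type u) [AddCommGroup M] [Module A M] (n : ℕ) : Prop :=
  ∃ R : AugProjRes A M, ∀ k : ℕ, n + 1 < k → ∀ x : R.Q k, x = 0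

/-- `M` has finite projective dimension. -/
def HasFiniteProjDim (M : Type u) [AddCommGroup M] [Module A M] : Prop :=
  ∃ n : ℕ, ProjDimLE A M n

/-- An augmented injective coresolution `0 → M ≅ Q 0 → Q 1 → Q 2 → ⋯`. -/
structure AugInjRes (M : Type u) [AddCommGroup M] [Module A M] where
  Q : ℕ → ModuleCat.{u} A
  d : ∀ n : ℕ, Q n →ₗ[A] Q (n + 1)
  iso : M ≃ₗ[A] ↥(Q 0)
  injQ : ∀ n, Module.Injective A (Q (n + 1))
  mono : Function.Injective (d 0)
  exact : ∀ n, Function.Exact (d n) (d (n + 1))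

/-- `M` has injective dimension at most `n`. -/
def InjDimLE (M : Type u) [AddCommGroup M] [Module A M] (n : ℕ) : Prop :=
  ∃ R : AugInjRes A M, ∀ k : ℕ, n + 1 < k → ∀ x : R.Q k, x = 0

/-- A (not necessarily finitely generated) module is Gorenstein-projective if it is the zeroth
cocycle of an acyclic complex of projectives which stays acyclic after applying
`Hom_A(-, Q)` for every projective `Q`. -/
def IsGProjLarge (M : Type u) [AddCommGroup M] [Module A M] : Prop :=
  ∃ C : ZComplex A, C.IsProj ∧ C.Acyclic ∧
    (∀ (Q : Type u) [AddCommGroup Q] [Module A Q], Module.Projective A Q →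
      ∀ n : ℤ, Function.Exact
        (fun g : C.P (n + 1 + 1) →ₗ[A] Q => g ∘ₗ C.d (n + 1))
        (fun f : C.P (n + 1) →ₗ[A] Q => f ∘ₗ C.d n)) ∧
    Nonempty (↥(LinearMap.ker (C.d 0)) ≃ₗ[A] M)

/-- The evaluation map `M → Hom_{Aᵒᵖ}(Hom_A(M, A), A)`. -/
noncomputable def evalMap (M : Type u) [AddCommGroup M] [Module A M] :
    M →ₗ[A] ((M →ₗ[A] A) →ₗ[Aᵐᵒᵖ] A) where
  toFun m :=
    { toFun := fun f => f m
      map_add' := fun f g => rfl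
      map_smul' := fun a f => rfl }
  map_add' m m' := by ext f; exact map_add f m m'
  map_smul' a m := by ext f; exact map_smul f a m

/-- in a short exact sequence `0 → N → M → L → 0` of finitely generated
modules, if `N` and `L` are Gorenstein-projective then so is `M`. -/
theorem stmt_5 (R : Type u) [CommRing R] [IsArtinianRing R] [Algebra R A] [Module.Finite R A]
    (N M L : Type u) [AddCommGroup N] [Module A N] [Module.Finite A N]
    [AddCommGroup M] [Module A M] [Module.Finite A M]
    [AddCommGroup L] [Module A L] [Module.Finite A L]
    (f : N →ₗ[A] M) (g : M →ₗ[A] L)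
    (hf : Function.Injective f) (hg : Function.Surjective g) (hfg : Function.Exact f g)
    (hN : IsGProj A N) (hL : IsGProj A L) :
    IsGProj A M := by
  classical
  obtain ⟨C, hCproj, hCfg, hCa, hCd, ⟨φ⟩⟩ := hN
  obtain ⟨D, hDproj, hDfg, hDa, hDd, ⟨ψ⟩⟩ := hL
  haveI : ∀ n : ℤ, Module.Finite A (C.P n) := hCfg
  haveI : ∀ n : ℤ, Module.Finite A (D.P n) := hDfg
  -- Step A : extend ι = (incl ∘ φ.symm) : N → C.P 0 to σ : M → C.P 0
  let ι : N →ₗ[A] C.P 0 := (LinearMap.ker (C.d 0)).subtype ∘ₗ φ.symm.toLinearMap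
  obtain ⟨σ, hσf⟩ := GPAux.ext_lemma hDd hDa hDproj f g hf hg hfg ψ (hCproj 0) ι
  -- Step B : construct δ0 : D.P 0 → C.P 1
  let τ' : M →ₗ[A] ↥(LinearMap.ker (D.d 0)) := ψ.symm.toLinearMap ∘ₗ g
  have hτ' : ∀ m, τ' m = ψ.symm (g m) := fun m => rfl
  have hτsurj : Function.Surjective τ' := by
    intro z
    obtain ⟨m, hm⟩ := hg (ψ z)
    exact ⟨m, by rw [hτ', hm, ψ.symm_apply_apply]⟩
  have hkerτ : LinearMap.ker τ' ≤ LinearMap.ker (-(C.d 0 ∘ₗ σ)) := by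
    intro m hm
    have hgm : g m = 0 := by
      have h1 : ψ.symm (g m) = 0 := LinearMap.mem_ker.mp hm
      have := congrArg ψ h1
      rwa [ψ.apply_symm_apply, map_zero] at this
    obtain ⟨n, hn⟩ := (hfg m).mp hgm
    rw [LinearMap.mem_ker]
    show -(C.d 0 (σ m)) = 0
    rw [← hn, hσf n]
    have h2 : C.d 0 (ι n) = 0 := (φ.symm n).2
    rw [h2, neg_zero]
  let eqv2 := τ'.quotKerEquivOfSurjective hτsurj
  let e : ↥(LinearMap.ker (D.d 0)) →ₗ[A] C.P (0 + 1) :=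
    ((LinearMap.ker τ').liftQ (-(C.d 0 ∘ₗ σ)) hkerτ) ∘ₗ eqv2.symm.toLinearMap
  have he : ∀ m, e (τ' m) = -(C.d 0 (σ m)) := by
    intro m
    have h1 : eqv2.symm (τ' m) = Submodule.Quotient.mk m := by
      apply eqv2.injective
      rw [eqv2.apply_symm_apply]
      rfl
    show ((LinearMap.ker τ').liftQ (-(C.d 0 ∘ₗ σ)) hkerτ) (eqv2.symm (τ' m)) = -(C.d 0 (σ m))
    rw [h1]
    rfl
  let e' : ↥(LinearMap.ker (D.d ((-1 : ℤ) + 1))) →ₗ[A] C.P (0 + 1) := e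
  have he'e : ∀ z : ↥(LinearMap.ker (D.d 0)), e' z = e z := fun z => rfl
  obtain ⟨δ0, hδ0spec⟩ := GPAux.keyLiftKer hDd hDa (hCproj ((0:ℤ) + 1)) (-1 : ℤ) e'
  let δ0' : D.P 0 →ₗ[A] C.P (0 + 1) := δ0
  have hδ0spec' : ∀ z : ↥(LinearMap.ker (D.d 0)), δ0' z.1 = e z := fun z =>
    (hδ0spec z).trans (he'e z)
  have hb : ∀ m : M, C.d 0 (σ m) + δ0' ((τ' m).1) = 0 := by
    intro m
    rw [hδ0spec' (τ' m), he m]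
    exact add_neg_cancel _
  have hInv0 : ∀ y, D.d 0 y = 0 → C.d (0 + 1) (δ0' y) = 0 := by
    intro y hy
    obtain ⟨m, hm⟩ := hτsurj ⟨y, LinearMap.mem_ker.mpr hy⟩
    have h1 : δ0' y = e ⟨y, LinearMap.mem_ker.mpr hy⟩ := hδ0spec' ⟨y, LinearMap.mem_ker.mpr hy⟩
    rw [h1, ← hm, he m, map_neg, C.comp_eq_zero, neg_zero]
  -- Step C : full family of connecting maps
  obtain ⟨δ, hδeq0, hanti⟩ := GPAux.full_delta hDd hDa hCa hCfg hCproj hDproj δ0' hInv0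
  -- total complex
  let TP : ℤ → ModuleCat.{u} A := fun n => ModuleCat.of A (↥(C.P n) × ↥(D.P n))
  let td : ∀ n : ℤ, TP n →ₗ[A] TP (n + 1) := fun n =>
    LinearMap.prod ((C.d n) ∘ₗ (LinearMap.fst A _ _) + (δ n) ∘ₗ (LinearMap.snd A _ _))
      ((D.d n) ∘ₗ (LinearMap.snd A _ _))
  have htd : ∀ (n : ℤ) (z : ↥(C.P n) × ↥(D.P n)),
      td n z = (C.d n z.1 + δ n z.2, D.d n z.2) := fun n z => rfl
  have hcz : ∀ (n : ℤ) (x : ↥(C.P n) × ↥(D.P n)), td (n + 1) (td n x) = 0 := by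
    intro n x
    rw [htd n x, htd (n + 1) _]
    have h1 : C.d (n + 1) (C.d n x.1 + δ n x.2) + δ (n + 1) (D.d n x.2) = 0 := by
      rw [map_add, C.comp_eq_zero, zero_add]
      exact hanti n x.2
    have h2 : D.d (n + 1) (D.d n x.2) = 0 := D.comp_eq_zero n x.2
    exact Prod.ext h1 h2
  refine ⟨⟨TP, td, hcz⟩, ?_, ?_, ?_, ?_, ?_⟩
  · -- IsProj
    intro n
    haveI := hCproj n
    haveI := hDproj n
    show Module.Projective A (↥(C.P n) × ↥(D.P n))
    exact inferInstance
  · -- IsFG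
    intro n
    show Module.Finite A (↥(C.P n) × ↥(D.P n))
    exact inferInstance
  · -- Acyclic
    intro n z
    constructor
    · intro h0
      have h1 : D.d (n + 1) z.2 = 0 := congrArg Prod.snd h0
      have h2 : C.d (n + 1) z.1 + δ (n + 1) z.2 = 0 := congrArg Prod.fst h0
      obtain ⟨y', hy'⟩ := (hDa n z.2).mp h1
      have h3 : C.d (n + 1) (z.1 - δ n y') = 0 := by
        rw [map_sub]
        have hA : C.d (n + 1) z.1 = -(δ (n + 1) z.2) := add_eq_zero_iff_eq_neg.mp h2
        have hB : C.d (n + 1) (δ n y') = -(δ (n + 1) z.2) := by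
          have := hanti n y'
          rw [hy'] at this
          exact add_eq_zero_iff_eq_neg.mp this
        rw [hA, hB, sub_self]
      obtain ⟨x', hx'⟩ := (hCa n _).mp h3
      refine ⟨(x', y'), ?_⟩
      rw [htd]
      refine Prod.ext ?_ ?_
      · show C.d n x' + δ n y' = z.1
        rw [hx']
        abel
      · exact hy'
    · rintro ⟨w, rfl⟩
      exact hcz n w
  · -- DualAcyclic
    intro n F
    constructor
    · intro h0
      have h0' : ∀ z, F (td n z) = 0 := fun z => DFunLike.congr_fun h0 z
      let FC : C.P (n + 1) →ₗ[A] A := F ∘ₗ (LinearMap.inl A _ _)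
      let FD : D.P (n + 1) →ₗ[A] A := F ∘ₗ (LinearMap.inr A _ _)
      have hFC : ∀ x, FC x = F (x, 0) := fun x => rfl
      have hFD : ∀ y, FD y = F (0, y) := fun y => rfl
      have hFsplit : ∀ z : ↥(C.P (n + 1)) × ↥(D.P (n + 1)), F z = FC z.1 + FD z.2 := by
        intro z
        have hzd : z = (z.1, (0 : ↥(D.P (n + 1)))) + ((0 : ↥(C.P (n + 1))), z.2) := by
          refine Prod.ext ?_ ?_
          · show z.1 = z.1 + 0
            rw [add_zero]
          · show z.2 = 0 + z.2
            rw [zero_add]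
        rw [hFC, hFD, ← map_add, ← hzd]
      have hFC0 : FC ∘ₗ C.d n = 0 := by
        apply LinearMap.ext
        intro x
        have h1 : td n (x, 0) = (C.d n x, 0) := by
          rw [htd]
          refine Prod.ext ?_ ?_
          · show C.d n x + δ n 0 = C.d n x
            rw [map_zero, add_zero]
          · exact map_zero _
        have h2 := h0' (x, 0)
        rw [h1] at h2
        exact h2
      obtain ⟨HC, hHC⟩ := (hCd n FC).mp hFC0
      have hHC' : ∀ x, HC (C.d (n + 1) x) = FC x := fun x => DFunLike.congr_fun hHC x
      have hmix : ∀ y : D.P n, FC (δ n y) + FD (D.d n y) = 0 := by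
        intro y
        have h1 : td n (0, y) = (δ n y, D.d n y) := by
          rw [htd]
          refine Prod.ext ?_ ?_
          · show C.d n 0 + δ n y = δ n y
            rw [map_zero, zero_add]
          · rfl
        have h2 := h0' (0, y)
        rw [h1] at h2
        exact (hFsplit (δ n y, D.d n y)).symm.trans h2
      have hFD0 : (FD - HC ∘ₗ (δ (n + 1))) ∘ₗ D.d n = 0 := by
        apply LinearMap.ext
        intro y
        show FD (D.d n y) - HC (δ (n + 1) (D.d n y)) = 0
        have h2 : δ (n + 1) (D.d n y) = -(C.d (n + 1) (δ n y)) :=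
          eq_neg_of_add_eq_zero_right (hanti n y)
        rw [h2, map_neg, hHC' (δ n y), sub_neg_eq_add, add_comm]
        exact hmix y
      obtain ⟨HD, hHD⟩ := (hDd n _).mp hFD0
      have hHD' : ∀ y, HD (D.d (n + 1) y) = FD y - HC (δ (n + 1) y) := by
        intro y
        have := DFunLike.congr_fun hHD y
        simpa using this
      refine ⟨HC ∘ₗ (LinearMap.fst A _ _) + HD ∘ₗ (LinearMap.snd A _ _), ?_⟩
      apply LinearMap.ext
      intro z
      show HC ((td (n + 1) z).1) + HD ((td (n + 1) z).2) = F z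
      rw [htd]
      show HC (C.d (n + 1) z.1 + δ (n + 1) z.2) + HD (D.d (n + 1) z.2) = F z
      rw [map_add, hHC', hHD', hFsplit z]
      abel
    · rintro ⟨G, rfl⟩
      apply LinearMap.ext
      intro z
      show G (td (n + 1) (td n z)) = 0
      rw [hcz n z, map_zero]
  · -- the zeroth cocycle is M
    have hθmem : ∀ m : M, LinearMap.prod σ ((LinearMap.ker (D.d 0)).subtype ∘ₗ τ') m
        ∈ LinearMap.ker (td 0) := by
      intro m
      rw [LinearMap.mem_ker]
      have h1 : td 0 (σ m, (τ' m).1) = (C.d 0 (σ m) + δ 0 ((τ' m).1), D.d 0 ((τ' m).1)) :=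
        htd 0 (σ m, (τ' m).1)
      show td 0 (σ m, (τ' m).1) = 0
      rw [h1]
      refine Prod.ext ?_ ?_
      · show C.d 0 (σ m) + δ 0 ((τ' m).1) = 0
        rw [hδeq0]
        exact hb m
      · exact (τ' m).2
    let θ : M →ₗ[A] ↥(LinearMap.ker (td 0)) :=
      (LinearMap.prod σ ((LinearMap.ker (D.d 0)).subtype ∘ₗ τ')).codRestrict _ hθmem
    have hθ : ∀ m, (θ m).1 = (σ m, (τ' m).1) := fun m => rfl
    have hθinj : Function.Injective θ := by
      have hz : ∀ m, θ m = 0 → m = 0 := by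
        intro m hm
        have h1 : σ m = 0 := congrArg (fun z => (z.1).1) hm
        have h2 : (τ' m).1 = 0 := congrArg (fun z => (z.1).2) hm
        have hgm : g m = 0 := by
          have h3 : τ' m = 0 := Subtype.ext h2
          have h4 : ψ.symm (g m) = 0 := h3
          have := congrArg ψ h4
          rwa [ψ.apply_symm_apply, map_zero] at this
        obtain ⟨n, hn⟩ := (hfg m).mp hgm
        have h5 : ι n = 0 := by rw [← hσf n, hn, h1]
        have h6 : φ.symm n = 0 := Subtype.ext h5
        have h7 : n = 0 := by
          have := congrArg φ h6
          rwa [φ.apply_symm_apply, map_zero] at this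
        rw [← hn, h7, map_zero]
      intro a b hab
      have := hz (a - b) (by rw [map_sub, hab, sub_self])
      exact sub_eq_zero.mp this
    have hθsurj : Function.Surjective θ := by
      intro z
      have hzk : td 0 z.1 = 0 := LinearMap.mem_ker.mp z.2
      have h2 : D.d 0 z.1.2 = 0 := by
        have := congrArg Prod.snd hzk
        rw [htd 0 z.1] at hzk
        exact congrArg Prod.snd hzk
      have h1 : C.d 0 z.1.1 + δ 0 z.1.2 = 0 := by
        rw [htd 0 z.1] at hzk
        exact congrArg Prod.fst hzk
      obtain ⟨m₁, hm₁⟩ := hg (ψ ⟨z.1.2, LinearMap.mem_ker.mpr h2⟩)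
      have hτm₁ : τ' m₁ = ⟨z.1.2, LinearMap.mem_ker.mpr h2⟩ := by
        rw [hτ', hm₁, ψ.symm_apply_apply]
      have hσd : C.d 0 (σ m₁) + δ 0 z.1.2 = 0 := by
        have := hb m₁
        rw [hτm₁] at this
        rw [← hδeq0] at this
        exact this
      have hsub : C.d 0 (z.1.1 - σ m₁) = 0 := by
        rw [map_sub]
        have hA : C.d 0 z.1.1 = -(δ 0 z.1.2) := add_eq_zero_iff_eq_neg.mp h1
        have hB : C.d 0 (σ m₁) = -(δ 0 z.1.2) := add_eq_zero_iff_eq_neg.mp hσd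
        rw [hA, hB, sub_self]
      refine ⟨m₁ + f (φ ⟨z.1.1 - σ m₁, LinearMap.mem_ker.mpr hsub⟩), ?_⟩
      apply Subtype.ext
      rw [hθ]
      refine Prod.ext ?_ ?_
      · show σ (m₁ + f (φ ⟨z.1.1 - σ m₁, _⟩)) = z.1.1
        rw [map_add, hσf]
        show σ m₁ + ((LinearMap.ker (C.d 0)).subtype (φ.symm (φ _))) = z.1.1
        rw [φ.symm_apply_apply]
        show σ m₁ + (z.1.1 - σ m₁) = z.1.1
        abel
      · show (τ' (m₁ + f (φ ⟨z.1.1 - σ m₁, _⟩))).1 = z.1.2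
        have hgf : g (f (φ ⟨z.1.1 - σ m₁, LinearMap.mem_ker.mpr hsub⟩)) = 0 :=
          (hfg _).mpr ⟨_, rfl⟩
        have : τ' (m₁ + f (φ ⟨z.1.1 - σ m₁, LinearMap.mem_ker.mpr hsub⟩)) = τ' m₁ := by
          rw [hτ', hτ', map_add, hgf, add_zero]
        rw [this, hτm₁]
    exact ⟨(LinearEquiv.ofBijective θ ⟨hθinj, hθsurj⟩).symm⟩
end

section
/- Let A be an artin algebra and 0 → N → M → L → 0 a short exact sequence of finitely generated A-modules with M and L Gorenstein-projective. Then N is Gorenstein-projective. -/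
universe u

open Function LinearMap

variable (A : Type u) [Ring A]

namespace Stmt7Aux

variable {RA : Type u} [Ring RA]

/-- transport along index equality -/
def pcast (C : ZComplex RA) {m n : ℤ} (h : m = n) : C.P m →ₗ[RA] C.P n := by
  subst h; exact LinearMap.id

@[simp] lemma pcast_rfl (C : ZComplex RA) {n : ℤ} (x : C.P n) : pcast C rfl x = x := rfl

lemma pcast_pcast (C : ZComplex RA) {m n k : ℤ} (h1 : m = n) (h2 : n = k) (x : C.P m) :
    pcast C h2 (pcast C h1 x) = pcast C (h1.trans h2) x := by subst h1; subst h2; rfl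

lemma d_pcast (C : ZComplex RA) {m n : ℤ} (h : m = n) (x : C.P m) :
    C.d n (pcast C h x) = pcast C (by rw [h]) (C.d m x) := by subst h; rfl

lemma pcast_eq_zero_iff (C : ZComplex RA) {m n : ℤ} (h : m = n) (x : C.P m) :
    pcast C h x = 0 ↔ x = 0 := by subst h; exact Iff.rfl

lemma pcast_inj (C : ZComplex RA) {m n : ℤ} (h : m = n) {x y : C.P m}
    (hxy : pcast C h x = pcast C h y) : x = y := by subst h; exact hxy

/-- a f.g. projective module is a direct summand of a finite free module -/
lemma exists_split (T : Type u) [AddCommGroup T] [Module RA T] (hfg : Module.Finite RA T)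
    (hp : Module.Projective RA T) :
    ∃ (k : ℕ) (ι : T →ₗ[RA] (Fin k → RA)) (pr : (Fin k → RA) →ₗ[RA] T), ∀ x, pr (ι x) = x := by
  obtain ⟨k, sgen, hs⟩ := Module.Finite.exists_fin (R := RA) (M := T)
  let pr : (Fin k → RA) →ₗ[RA] T :=
    { toFun := fun c => ∑ i, c i • sgen i
      map_add' := by
        intro a b
        simp [add_smul, Finset.sum_add_distrib]
      map_smul' := by
        intro a c
        simp [Finset.smul_sum, mul_smul] }
  have hsurj : Function.Surjective pr := by
    intro x
    have hx : x ∈ Submodule.span RA (Set.range sgen) := by rw [hs]; trivial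
    obtain ⟨c, hc⟩ := (Submodule.mem_span_range_iff_exists_fun RA).mp hx
    exact ⟨c, hc⟩
  obtain ⟨ι, hι⟩ := Module.projective_lifting_property pr (LinearMap.id) hsurj
  exact ⟨k, ι, pr, fun x => congrArg (fun (m : T →ₗ[RA] T) => m x) hι⟩

/-- Extension lemma: for a totally acyclic complex, any map from a cocycle module to a
f.g. projective module extends to the ambient term. -/
lemma extend_lemma (C : ZComplex RA) (hAc : C.Acyclic) (hDu : C.DualAcyclic)
    (T : Type u) [AddCommGroup T] [Module RA T] (hfg : Module.Finite RA T)
    (hp : Module.Projective RA T)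
    (m : ℤ) {n : ℤ} (hmn : m + 1 + 1 = n) (v : ↥(LinearMap.ker (C.d n)) →ₗ[RA] T) :
    ∃ h : C.P n →ₗ[RA] T, ∀ z (hz : z ∈ LinearMap.ker (C.d n)), h z = v ⟨z, hz⟩ := by
  subst hmn
  obtain ⟨k, ι, pr, hpi⟩ := exists_split T hfg hp
  have key : ∀ (w : ↥(LinearMap.ker (C.d (m+1+1))) →ₗ[RA] RA),
      ∃ h : C.P (m+1+1) →ₗ[RA] RA, ∀ z hz, h z = w ⟨z, hz⟩ := by
    intro w
    have hco : ∀ x : C.P (m+1), C.d (m+1) x ∈ LinearMap.ker (C.d (m+1+1)) := by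
      intro x; exact LinearMap.mem_ker.mpr (C.comp_eq_zero (m+1) x)
    set f : C.P (m+1) →ₗ[RA] RA :=
      w ∘ₗ ((C.d (m+1)).codRestrict (LinearMap.ker (C.d (m+1+1))) hco) with hf_def
    have hf : f ∘ₗ C.d m = 0 := by
      ext x
      have : (⟨C.d (m+1) (C.d m x), hco _⟩ : ↥(LinearMap.ker (C.d (m+1+1)))) = 0 := by
        ext; exact C.comp_eq_zero m x
      simp only [hf_def, LinearMap.comp_apply, LinearMap.codRestrict_apply, LinearMap.zero_apply]
      rw [show ((C.d (m+1)).codRestrict (LinearMap.ker (C.d (m+1+1))) hco) (C.d m x) = 0 from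
        by ext; exact C.comp_eq_zero m x]
      exact map_zero w
    obtain ⟨g, hg⟩ := (hDu m f).mp hf
    refine ⟨g, ?_⟩
    intro z hz
    obtain ⟨y, hy⟩ := (hAc (m+1) z).mp (LinearMap.mem_ker.mp hz)
    have h1 : g z = f y := by rw [← hy]; exact congrArg (fun (q : C.P (m+1) →ₗ[RA] RA) => q y) hg
    rw [h1]
    simp only [hf_def, LinearMap.comp_apply, LinearMap.codRestrict_apply]
    congr 1
    ext
    exact hy
  choose hcomp hcompspec using fun i : Fin k =>
    key ((LinearMap.proj i) ∘ₗ (ι ∘ₗ v))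
  refine ⟨pr ∘ₗ (LinearMap.pi hcomp), ?_⟩
  intro z hz
  have hpiz : (LinearMap.pi hcomp) z = ι (v ⟨z, hz⟩) := by
    funext i
    exact hcompspec i z hz
  simp only [LinearMap.comp_apply]
  rw [hpiz, hpi]


section ChainMap

variable (C B : ZComplex RA)

def UpProp (n : ℤ) (f : C.P n →ₗ[RA] B.P (n+1)) : Prop :=
  ∀ z, C.d n z = 0 → B.d (n+1) (f z) = 0

lemma stepUp (hAcC : C.Acyclic) (hDuC : C.DualAcyclic) (hFB : B.IsFG) (hPB : B.IsProj)
    (n : ℤ) (f : C.P n →ₗ[RA] B.P (n+1)) (hf : UpProp C B n f) :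
    ∃ f' : C.P (n+1) →ₗ[RA] B.P (n+1+1),
      (∀ x, B.d (n+1) (f x) = f' (C.d n x)) ∧ UpProp C B (n+1) f' := by
  set w : C.P n →ₗ[RA] B.P (n+1+1) := B.d (n+1) ∘ₗ f with hw
  have hker : LinearMap.ker (C.d n) ≤ LinearMap.ker w := by
    intro z hz
    exact LinearMap.mem_ker.mpr (hf z (LinearMap.mem_ker.mp hz))
  have hrk : LinearMap.range (C.d n) = LinearMap.ker (C.d (n+1)) :=
    (LinearMap.exact_iff.mp (hAcC n)).symm
  let u : ↥(LinearMap.ker (C.d (n+1))) →ₗ[RA] B.P (n+1+1) :=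
    ((LinearMap.ker (C.d n)).liftQ w hker) ∘ₗ
      ((C.d n).quotKerEquivRange.symm.toLinearMap) ∘ₗ
      (LinearEquiv.ofEq _ _ hrk.symm).toLinearMap
  have hu : ∀ x : C.P n, u ⟨C.d n x, hrk ▸ LinearMap.mem_range_self _ x⟩ = w x := by
    intro x
    show ((LinearMap.ker (C.d n)).liftQ w hker)
      ((C.d n).quotKerEquivRange.symm ((LinearEquiv.ofEq _ _ hrk.symm)
        ⟨C.d n x, _⟩)) = w x
    have h1 : (LinearEquiv.ofEq _ _ hrk.symm)
        (⟨C.d n x, hrk ▸ LinearMap.mem_range_self _ x⟩ : ↥(LinearMap.ker (C.d (n+1))))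
        = ⟨C.d n x, LinearMap.mem_range_self _ x⟩ := rfl
    rw [h1]
    have h2 : (C.d n).quotKerEquivRange.symm ⟨C.d n x, LinearMap.mem_range_self _ x⟩
        = Submodule.Quotient.mk x := by
      apply (C.d n).quotKerEquivRange.injective
      rw [LinearEquiv.apply_symm_apply]
      rfl
    rw [h2]
    rfl
  obtain ⟨f', hf'⟩ := extend_lemma C hAcC hDuC (B.P (n+1+1)) (hFB _) (hPB _)
    (n - 1) (by ring) u
  refine ⟨f', ?_, ?_⟩
  · intro x
    have := hf' (C.d n x) (hrk ▸ LinearMap.mem_range_self _ x)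
    rw [this, hu]
    rfl
  · intro z hz
    obtain ⟨y, hy⟩ := (hAcC n z).mp hz
    have hz' : z ∈ LinearMap.ker (C.d (n+1)) := LinearMap.mem_ker.mpr hz
    have h1 : f' z = u ⟨z, hz'⟩ := hf' z hz'
    have h2 : (⟨z, hz'⟩ : ↥(LinearMap.ker (C.d (n+1))))
        = ⟨C.d n y, hrk ▸ LinearMap.mem_range_self _ y⟩ := by ext; exact hy.symm
    rw [h1, h2, hu]
    show B.d (n+1+1) (B.d (n+1) (f y)) = 0
    exact B.comp_eq_zero (n+1) (f y)

lemma stepDown (hAcB : B.Acyclic) (hPC : C.IsProj)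
    (m : ℤ) (f : C.P (m+1) →ₗ[RA] B.P (m+1+1)) (f' : C.P (m+1+1) →ₗ[RA] B.P (m+1+1+1))
    (hlink : ∀ x, B.d (m+1+1) (f x) = f' (C.d (m+1) x)) :
    ∃ f₀ : C.P m →ₗ[RA] B.P (m+1), ∀ x, B.d (m+1) (f₀ x) = f (C.d m x) := by
  have hmem : ∀ x : C.P m, f (C.d m x) ∈ LinearMap.range (B.d (m+1)) := by
    intro x
    apply (hAcB (m+1) (f (C.d m x))).mp
    rw [hlink (C.d m x)]
    rw [show C.d (m+1) (C.d m x) = 0 from C.comp_eq_zero m x]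
    exact map_zero _
  haveI := hPC m
  obtain ⟨h, hh⟩ := Module.projective_lifting_property
    ((B.d (m+1)).rangeRestrict)
    ((f ∘ₗ C.d m).codRestrict (LinearMap.range (B.d (m+1))) hmem)
    (LinearMap.surjective_rangeRestrict _)
  refine ⟨h, fun x => ?_⟩
  have := congrArg (fun (q : C.P m →ₗ[RA] ↥(LinearMap.range (B.d (m+1)))) => (q x : ↥(B.P (m+1+1)))) hh
  simpa using this

variable (hAcC : C.Acyclic) (hDuC : C.DualAcyclic) (hPC : C.IsProj)
variable (hAcB : B.Acyclic) (hPB : B.IsProj) (hFB : B.IsFG)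
variable (ψ0 : C.P (Int.ofNat 0) →ₗ[RA] B.P (Int.ofNat 0 + 1)) (hUp0 : UpProp C B (Int.ofNat 0) ψ0)

noncomputable def upSeq :
    ∀ k : ℕ, {f : C.P (Int.ofNat k) →ₗ[RA] B.P (Int.ofNat k + 1) // UpProp C B (Int.ofNat k) f}
  | 0 => ⟨ψ0, hUp0⟩
  | (k+1) =>
    ⟨(stepUp C B hAcC hDuC hFB hPB (Int.ofNat k)
        (upSeq k).1 (upSeq k).2).choose,
     (stepUp C B hAcC hDuC hFB hPB (Int.ofNat k)
        (upSeq k).1 (upSeq k).2).choose_spec.2⟩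

lemma upSeq_link (k : ℕ) : ∀ x,
    B.d (Int.ofNat k + 1) ((upSeq C B hAcC hDuC hPB hFB ψ0 hUp0 k).1 x)
      = (upSeq C B hAcC hDuC hPB hFB ψ0 hUp0 (k+1)).1 (C.d (Int.ofNat k) x) :=
  (stepUp C B hAcC hDuC hFB hPB (Int.ofNat k)
    (upSeq C B hAcC hDuC hPB hFB ψ0 hUp0 k).1
    (upSeq C B hAcC hDuC hPB hFB ψ0 hUp0 k).2).choose_spec.1

noncomputable def downSeq
    (a : C.P (Int.negSucc 0) →ₗ[RA] B.P (Int.negSucc 0 + 1))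
    (b : C.P (Int.negSucc 0 + 1) →ₗ[RA] B.P (Int.negSucc 0 + 1 + 1))
    (hab : ∀ x, B.d (Int.negSucc 0 + 1) (a x) = b (C.d (Int.negSucc 0) x)) :
    ∀ k : ℕ, {p : (C.P (Int.negSucc k) →ₗ[RA] B.P (Int.negSucc k + 1)) ×
               (C.P (Int.negSucc k + 1) →ₗ[RA] B.P (Int.negSucc k + 1 + 1)) //
               ∀ x, B.d (Int.negSucc k + 1) (p.1 x) = p.2 (C.d (Int.negSucc k) x)}
  | 0 => ⟨(a, b), hab⟩
  | (k+1) =>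
    ⟨((stepDown C B hAcB hPC (Int.negSucc (k+1))
          (downSeq a b hab k).1.1 (downSeq a b hab k).1.2 (downSeq a b hab k).2).choose,
      (downSeq a b hab k).1.1),
     (stepDown C B hAcB hPC (Int.negSucc (k+1))
          (downSeq a b hab k).1.1 (downSeq a b hab k).1.2 (downSeq a b hab k).2).choose_spec⟩

variable {C B}

lemma exists_chain_map (hAcC : C.Acyclic) (hDuC : C.DualAcyclic) (hPC : C.IsProj)
    (hAcB : B.Acyclic) (hPB : B.IsProj) (hFB : B.IsFG)
    (γ : ↥(LinearMap.ker (C.d 0)) →ₗ[RA] ↥(B.P 1)) (hγ : ∀ z, B.d 1 (γ z) = 0) :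
    ∃ ψ : ∀ n : ℤ, C.P n →ₗ[RA] B.P (n+1),
      (∀ n x, B.d (n+1) (ψ n x) = ψ (n+1) (C.d n x)) ∧
      (∀ z hz, ψ 0 z = γ ⟨z, hz⟩) := by
  classical
  obtain ⟨ψ0, hψ0⟩ := extend_lemma C hAcC hDuC (B.P 1) (hFB 1) (hPB 1)
    (-2) (by decide) γ
  have hUp0 : UpProp C B (Int.ofNat 0) ψ0 := by
    intro z hz
    have hz' : z ∈ LinearMap.ker (C.d 0) := hz
    show B.d 1 (ψ0 z) = 0
    rw [hψ0 z hz']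
    exact hγ _
  set up := upSeq C B hAcC hDuC hPB hFB ψ0 hUp0 with hup
  -- base for downward recursion
  obtain ⟨a, ha⟩ := stepDown C B hAcB hPC (Int.negSucc 0) ψ0 (up 1).1
    (upSeq_link C B hAcC hDuC hPB hFB ψ0 hUp0 0)
  set dn := downSeq C B hPC hAcB a ψ0 ha with hdn
  refine ⟨fun n => match n with
    | Int.ofNat k => (up k).1
    | Int.negSucc k => (dn k).1.1, ?_, ?_⟩
  · intro n
    match n with
    | Int.ofNat k => exact upSeq_link C B hAcC hDuC hPB hFB ψ0 hUp0 k
    | Int.negSucc 0 => exact (dn 0).2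
    | Int.negSucc (k+1) =>
      intro x
      have h := (dn (k+1)).2 x
      rw [h]
      have : (dn (k+1)).1.2 = (dn k).1.1 := rfl
      rw [this]
      rfl
  · intro z hz
    exact hψ0 z hz

end ChainMap

section Cone

variable (C B : ZComplex RA) (ψ : ∀ n : ℤ, C.P n →ₗ[RA] B.P (n+1))
variable (hψ : ∀ n x, B.d (n+1) (ψ n x) = ψ (n+1) (C.d n x))

/-- the cone-type complex: `G.P n = C.P n × B.P n`,
`G.d n (c, b) = (C.d n c, ψ n c - B.d n b)` -/
def coneG : ZComplex RA where
  P n := ModuleCat.of RA (↥(C.P n) × ↥(B.P n))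
  d n := ((C.d n) ∘ₗ (LinearMap.fst RA ↥(C.P n) ↥(B.P n))).prod
      ((ψ n) ∘ₗ (LinearMap.fst RA ↥(C.P n) ↥(B.P n))
        - (B.d n) ∘ₗ (LinearMap.snd RA ↥(C.P n) ↥(B.P n)))
  comp_eq_zero := by
    intro n x
    have h1 : C.d (n+1) (C.d n x.1) = 0 := C.comp_eq_zero n x.1
    apply Prod.ext
    · exact h1
    · show ψ (n+1) (C.d n x.1) - B.d (n+1) (ψ n x.1 - B.d n x.2) = 0
      rw [map_sub, ← hψ n x.1, B.comp_eq_zero n x.2]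
      simp

lemma coneG_apply_d (n : ℤ) (x : ↥((coneG C B ψ hψ).P n)) :
    (coneG C B ψ hψ).d n x = (C.d n x.1, ψ n x.1 - B.d n x.2) := rfl

lemma coneG_isProj (hPC : C.IsProj) (hPB : B.IsProj) : (coneG C B ψ hψ).IsProj := by
  intro n
  haveI := hPC n
  haveI := hPB n
  show Module.Projective RA (↥(C.P n) × ↥(B.P n))
  infer_instance

lemma coneG_isFG (hFC : C.IsFG) (hFB : B.IsFG) : (coneG C B ψ hψ).IsFG := by
  intro n
  haveI := hFC n
  haveI := hFB n
  show Module.Finite RA (↥(C.P n) × ↥(B.P n))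
  infer_instance

lemma coneG_acyclic (hAcC : C.Acyclic) (hAcB : B.Acyclic) : (coneG C B ψ hψ).Acyclic := by
  intro n y
  constructor
  · intro hy
    have h1 : C.d (n+1) y.1 = 0 := congrArg Prod.fst hy
    have h2 : ψ (n+1) y.1 - B.d (n+1) y.2 = 0 := congrArg Prod.snd hy
    obtain ⟨c', hc'⟩ := (hAcC n y.1).mp h1
    have hb : B.d (n+1) (ψ n c' - y.2) = 0 := by
      rw [map_sub, hψ n c', hc']
      exact h2
    obtain ⟨b', hb'⟩ := (hAcB n (ψ n c' - y.2)).mp hb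
    refine ⟨(c', b'), ?_⟩
    show (C.d n c', ψ n c' - B.d n b') = y
    rw [hb', hc']
    apply Prod.ext
    · rfl
    · show ψ n c' - (ψ n c' - y.2) = y.2; exact sub_sub_cancel _ _
  · rintro ⟨x, rfl⟩
    exact (coneG C B ψ hψ).comp_eq_zero n x

lemma coneG_dualAcyclic (hDuC : C.DualAcyclic) (hDuB : B.DualAcyclic) :
    (coneG C B ψ hψ).DualAcyclic := by
  intro n f
  constructor
  · intro hf
    -- components
    set f₁ : ↥(C.P (n+1)) →ₗ[RA] RA := f ∘ₗ (LinearMap.inl RA ↥(C.P (n+1)) ↥(B.P (n+1))) with hf₁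
    set f₂ : ↥(B.P (n+1)) →ₗ[RA] RA := f ∘ₗ (LinearMap.inr RA ↥(C.P (n+1)) ↥(B.P (n+1))) with hf₂
    have hsplit : ∀ z : ↥((coneG C B ψ hψ).P (n+1)), f z = f₁ z.1 + f₂ z.2 := by
      intro z
      have : z = (z.1, (0 : ↥(B.P (n+1)))) + ((0 : ↥(C.P (n+1))), z.2) := by
        apply Prod.ext <;> simp
      rw [show f z = f ((z.1, (0 : ↥(B.P (n+1)))) + ((0 : ↥(C.P (n+1))), z.2)) from by rw [← this]]
      refine (map_add f _ _).trans ?_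
      rfl
    have hf' : f ∘ₗ (coneG C B ψ hψ).d n = 0 := hf
    have hcond : ∀ x : ↥((coneG C B ψ hψ).P n),
        f₁ (C.d n x.1) + f₂ (ψ n x.1 - B.d n x.2) = 0 := by
      intro x
      have := LinearMap.congr_fun hf' x
      simp only [LinearMap.comp_apply, LinearMap.zero_apply] at this ⊢
      rw [← this]
      show _ = f ((coneG C B ψ hψ).d n x)
      rw [coneG_apply_d]; exact (hsplit ((coneG C B ψ hψ).d n x)).symm
    have hc2 : f₂ ∘ₗ B.d n = 0 := by
      ext b
      have := hcond (0, b)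
      simpa using this
    have hc1 : ∀ c : ↥(C.P n), f₁ (C.d n c) + f₂ (ψ n c) = 0 := by
      intro c
      have := hcond (c, 0)
      simpa using this
    obtain ⟨g₂, hg₂⟩ := (hDuB n f₂).mp hc2
    set q : ↥(C.P (n+1)) →ₗ[RA] RA := f₁ + g₂ ∘ₗ ψ (n+1) with hq
    have hqd : q ∘ₗ C.d n = 0 := by
      ext c
      simp only [hq, LinearMap.comp_apply, LinearMap.add_apply, LinearMap.zero_apply]
      rw [← hψ n c]
      have : g₂ (B.d (n+1) (ψ n c)) = f₂ (ψ n c) := by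
        rw [← hg₂]; rfl
      rw [this]
      exact hc1 c
    obtain ⟨h₁, hh₁⟩ := (hDuC n q).mp hqd
    refine ⟨h₁ ∘ₗ (LinearMap.fst RA ↥(C.P (n+1+1)) ↥(B.P (n+1+1)))
      - g₂ ∘ₗ (LinearMap.snd RA ↥(C.P (n+1+1)) ↥(B.P (n+1+1))), ?_⟩
    ext z
    show h₁ (C.d (n+1) z.1) - g₂ (ψ (n+1) z.1 - B.d (n+1) z.2) = f z
    rw [hsplit]
    have e1 : h₁ (C.d (n+1) z.1) = q z.1 := by
      rw [← hh₁]; rfl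
    have e2 : g₂ (B.d (n+1) z.2) = f₂ z.2 := by rw [← hg₂]; rfl
    rw [map_sub, e1, e2, hq]
    simp only [LinearMap.add_apply, LinearMap.comp_apply]
    abel
  · rintro ⟨g, rfl⟩
    ext x
    show g ((coneG C B ψ hψ).d (n+1) ((coneG C B ψ hψ).d n x)) = 0
    rw [(coneG C B ψ hψ).comp_eq_zero n x]
    exact map_zero g

end Cone

section EConstr

/-- alternating coefficient -/
noncomputable def cP (B : ZComplex RA) (n : ℤ) : ↥(B.P 0) →ₗ[RA] ↥(B.P 0) :=
  if Even n then LinearMap.id else 0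

lemma cP_succ (B : ZComplex RA) (n : ℤ) (p : ↥(B.P 0)) : cP B (n+1) (cP B n p) = 0 := by
  rcases Int.even_or_odd n with h | h
  · have h' : ¬ Even (n+1) := by simp [Int.even_add_one, h]
    simp [cP, h, h']
  · have h' : ¬ Even n := by simp [← Int.not_even_iff_odd] at h; exact h
    simp [cP, h']

variable (C B : ZComplex RA) (ψ : ∀ n : ℤ, C.P n →ₗ[RA] B.P (n+1))
variable (hψ : ∀ n x, B.d (n+1) (ψ n x) = ψ (n+1) (C.d n x))

/-- projection of `G.P 0` onto `B.P 0` -/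
def rhoG : ↥((coneG C B ψ hψ).P (Int.ofNat 0)) →ₗ[RA] ↥(B.P 0) :=
  LinearMap.snd RA ↥(C.P 0) ↥(B.P 0)

/-- `τ = ρ ∘ G.d (-1)` -/
def tauG : ↥((coneG C B ψ hψ).P (Int.negSucc 0)) →ₗ[RA] ↥(B.P 0) :=
  rhoG C B ψ hψ ∘ₗ ((coneG C B ψ hψ).d (Int.negSucc 0))

variable (s : ↥(B.P 0) →ₗ[RA] ↥((coneG C B ψ hψ).P (Int.negSucc 0)))

def deltaG : ↥((coneG C B ψ hψ).P (Int.negSucc 0)) →ₗ[RA] ↥((coneG C B ψ hψ).P (Int.ofNat 0)) :=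
  ((coneG C B ψ hψ).d (Int.negSucc 0)) ∘ₗ (LinearMap.id - s ∘ₗ tauG C B ψ hψ)

noncomputable def EP : ℤ → ModuleCat.{u} RA := fun n => match n with
  | Int.ofNat 0 => (coneG C B ψ hψ).P (Int.ofNat 0)
  | Int.negSucc 0 => (coneG C B ψ hψ).P (Int.negSucc 0)
  | Int.ofNat (k+1) => ModuleCat.of RA (↥((coneG C B ψ hψ).P (Int.ofNat (k+1))) × ↥(B.P 0))
  | Int.negSucc (k+1) => ModuleCat.of RA (↥((coneG C B ψ hψ).P (Int.negSucc (k+1))) × ↥(B.P 0))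

noncomputable def Ed : ∀ n : ℤ, EP C B ψ hψ n →ₗ[RA] EP C B ψ hψ (n+1) := fun n =>
  match n with
  | Int.ofNat 0 => ((coneG C B ψ hψ).d (Int.ofNat 0)).prod (rhoG C B ψ hψ)
  | Int.ofNat (k+1) =>
      (((coneG C B ψ hψ).d (Int.ofNat (k+1)))
          ∘ₗ (LinearMap.fst RA ↥((coneG C B ψ hψ).P (Int.ofNat (k+1))) ↥(B.P 0))).prod
        ((cP B (Int.ofNat (k+1)))
          ∘ₗ (LinearMap.snd RA ↥((coneG C B ψ hψ).P (Int.ofNat (k+1))) ↥(B.P 0)))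
  | Int.negSucc 0 => deltaG C B ψ hψ s
  | Int.negSucc 1 =>
      (show (↥((coneG C B ψ hψ).P (Int.negSucc 1)) × ↥(B.P 0)) →ₗ[RA]
          ↥((coneG C B ψ hψ).P (Int.negSucc 0)) from
        ((coneG C B ψ hψ).d (Int.negSucc 1))
          ∘ₗ (LinearMap.fst RA ↥((coneG C B ψ hψ).P (Int.negSucc 1)) ↥(B.P 0)))
        + s ∘ₗ (LinearMap.snd RA ↥((coneG C B ψ hψ).P (Int.negSucc 1)) ↥(B.P 0))
  | Int.negSucc (k+2) =>
      (((coneG C B ψ hψ).d (Int.negSucc (k+2)))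
          ∘ₗ (LinearMap.fst RA ↥((coneG C B ψ hψ).P (Int.negSucc (k+2))) ↥(B.P 0))).prod
        ((cP B (Int.negSucc (k+2)))
          ∘ₗ (LinearMap.snd RA ↥((coneG C B ψ hψ).P (Int.negSucc (k+2))) ↥(B.P 0)))

end EConstr

section EcomplexSec

variable (C B : ZComplex RA) (ψ : ∀ n : ℤ, C.P n →ₗ[RA] B.P (n+1))
variable (hψ : ∀ n x, B.d (n+1) (ψ n x) = ψ (n+1) (C.d n x))
variable (s : ↥(B.P 0) →ₗ[RA] ↥((coneG C B ψ hψ).P (Int.negSucc 0)))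

lemma cP_even {n : ℤ} (h : Even n) : cP B n = LinearMap.id := by simp [cP, h]
lemma cP_odd {n : ℤ} (h : ¬ Even n) : cP B n = 0 := by simp [cP, h]

lemma rho_dG (z : ↥((coneG C B ψ hψ).P (Int.negSucc 0))) :
    rhoG C B ψ hψ ((coneG C B ψ hψ).d (Int.negSucc 0) z) = tauG C B ψ hψ z := rfl

/-- `G.d (-2)` with its target rewritten up to defeq -/
def dGm2 : ↥((coneG C B ψ hψ).P (Int.negSucc 1)) →ₗ[RA] ↥((coneG C B ψ hψ).P (Int.negSucc 0)) :=
  (coneG C B ψ hψ).d (Int.negSucc 1)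

lemma dGm2_comp (y : ↥((coneG C B ψ hψ).P (Int.negSucc 1))) :
    (coneG C B ψ hψ).d (Int.negSucc 0) (dGm2 C B ψ hψ y) = 0 :=
  (coneG C B ψ hψ).comp_eq_zero (Int.negSucc 1) y

lemma dGm2_d (x : ↥((coneG C B ψ hψ).P (Int.negSucc 2))) :
    dGm2 C B ψ hψ ((coneG C B ψ hψ).d (Int.negSucc 2) x) = 0 :=
  (coneG C B ψ hψ).comp_eq_zero (Int.negSucc 2) x

lemma tau_dG (y : ↥((coneG C B ψ hψ).P (Int.negSucc 1))) :
    tauG C B ψ hψ (dGm2 C B ψ hψ y) = 0 := by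
  show rhoG C B ψ hψ ((coneG C B ψ hψ).d (Int.negSucc 0) (dGm2 C B ψ hψ y)) = 0
  rw [dGm2_comp]
  exact map_zero _

lemma deltaG_apply (x : ↥((coneG C B ψ hψ).P (Int.negSucc 0))) :
    deltaG C B ψ hψ s x
      = (coneG C B ψ hψ).d (Int.negSucc 0) (x - s (tauG C B ψ hψ x)) := rfl

lemma d_deltaG (x : ↥((coneG C B ψ hψ).P (Int.negSucc 0))) :
    (coneG C B ψ hψ).d (Int.ofNat 0) (deltaG C B ψ hψ s x) = 0 := by
  rw [deltaG_apply]
  exact (coneG C B ψ hψ).comp_eq_zero (Int.negSucc 0) _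

lemma rho_deltaG (hs : ∀ p, tauG C B ψ hψ (s p) = p)
    (x : ↥((coneG C B ψ hψ).P (Int.negSucc 0))) :
    rhoG C B ψ hψ (deltaG C B ψ hψ s x) = 0 := by
  rw [deltaG_apply, rho_dG, map_sub, hs]
  simp

lemma deltaG_dm2 (hs : ∀ p, tauG C B ψ hψ (s p) = p)
    (y : ↥((coneG C B ψ hψ).P (Int.negSucc 1))) (p : ↥(B.P 0)) :
    deltaG C B ψ hψ s (dGm2 C B ψ hψ y + s p) = 0 := by
  rw [deltaG_apply, map_add, tau_dG, zero_add, hs, add_sub_cancel_right]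
  exact dGm2_comp C B ψ hψ y

noncomputable def Ecomplex (hs : ∀ p, tauG C B ψ hψ (s p) = p) : ZComplex RA where
  P := EP C B ψ hψ
  d := Ed C B ψ hψ s
  comp_eq_zero := by
    intro n
    match n with
    | Int.ofNat 0 =>
      intro x
      apply Prod.ext
      · exact (coneG C B ψ hψ).comp_eq_zero (Int.ofNat 0) x
      · show cP B (Int.ofNat 1) (rhoG C B ψ hψ x) = 0
        rw [cP_odd B (by rw [Int.even_iff]; decide)]
        rfl
    | Int.ofNat (k+1) =>
      intro x
      apply Prod.ext
      · exact (coneG C B ψ hψ).comp_eq_zero (Int.ofNat (k+1)) x.1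
      · exact cP_succ B (Int.ofNat (k+1)) x.2
    | Int.negSucc 0 =>
      intro x
      apply Prod.ext
      · exact d_deltaG C B ψ hψ s x
      · exact rho_deltaG C B ψ hψ s hs x
    | Int.negSucc 1 =>
      intro x
      exact deltaG_dm2 C B ψ hψ s hs x.1 x.2
    | Int.negSucc 2 =>
      intro x
      show dGm2 C B ψ hψ ((coneG C B ψ hψ).d (Int.negSucc 2) x.1)
          + s (cP B (Int.negSucc 2) x.2) = 0
      rw [cP_odd B (n := Int.negSucc 2) (by rw [Int.even_iff]; decide), dGm2_d]
      simp
    | Int.negSucc (k+3) =>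
      intro x
      apply Prod.ext
      · exact (coneG C B ψ hψ).comp_eq_zero (Int.negSucc (k+3)) x.1
      · exact cP_succ B (Int.negSucc (k+3)) x.2

end EcomplexSec

section EProps

variable (C B : ZComplex RA) (ψ : ∀ n : ℤ, C.P n →ₗ[RA] B.P (n+1))
variable (hψ : ∀ n x, B.d (n+1) (ψ n x) = ψ (n+1) (C.d n x))
variable (s : ↥(B.P 0) →ₗ[RA] ↥((coneG C B ψ hψ).P (Int.negSucc 0)))

lemma E_isProj (hs : ∀ p, tauG C B ψ hψ (s p) = p)
    (hPC : C.IsProj) (hPB : B.IsProj) : (Ecomplex C B ψ hψ s hs).IsProj := by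
  have hG := coneG_isProj C B ψ hψ hPC hPB
  intro n
  haveI := hPB 0
  match n with
  | Int.ofNat 0 => exact hG (Int.ofNat 0)
  | Int.negSucc 0 => exact hG (Int.negSucc 0)
  | Int.ofNat (k+1) =>
    haveI := hG (Int.ofNat (k+1))
    show Module.Projective RA (↥((coneG C B ψ hψ).P (Int.ofNat (k+1))) × ↥(B.P 0))
    infer_instance
  | Int.negSucc (k+1) =>
    haveI := hG (Int.negSucc (k+1))
    show Module.Projective RA (↥((coneG C B ψ hψ).P (Int.negSucc (k+1))) × ↥(B.P 0))
    infer_instance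

lemma E_isFG (hs : ∀ p, tauG C B ψ hψ (s p) = p)
    (hFC : C.IsFG) (hFB : B.IsFG) : (Ecomplex C B ψ hψ s hs).IsFG := by
  have hG := coneG_isFG C B ψ hψ hFC hFB
  intro n
  haveI := hFB 0
  match n with
  | Int.ofNat 0 => exact hG (Int.ofNat 0)
  | Int.negSucc 0 => exact hG (Int.negSucc 0)
  | Int.ofNat (k+1) =>
    haveI := hG (Int.ofNat (k+1))
    show Module.Finite RA (↥((coneG C B ψ hψ).P (Int.ofNat (k+1))) × ↥(B.P 0))
    infer_instance
  | Int.negSucc (k+1) =>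
    haveI := hG (Int.negSucc (k+1))
    show Module.Finite RA (↥((coneG C B ψ hψ).P (Int.negSucc (k+1))) × ↥(B.P 0))
    infer_instance

lemma E_acyclic (hs : ∀ p, tauG C B ψ hψ (s p) = p)
    (hAcG : (coneG C B ψ hψ).Acyclic)
    (pSurj : ∀ p : ↥(B.P 0), ∃ y : ↥((coneG C B ψ hψ).P (Int.ofNat 0)),
      (coneG C B ψ hψ).d (Int.ofNat 0) y = 0 ∧ rhoG C B ψ hψ y = p) :
    (Ecomplex C B ψ hψ s hs).Acyclic := by
  intro n
  match n with
  | Int.ofNat 0 =>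
    intro y
    constructor
    · intro hy
      have h1 : (coneG C B ψ hψ).d (Int.ofNat 1) y.1 = 0 := congrArg Prod.fst hy
      obtain ⟨x₀, hx₀⟩ := (hAcG (Int.ofNat 0) y.1).mp h1
      obtain ⟨z, hz1, hz2⟩ := pSurj (y.2 - rhoG C B ψ hψ x₀)
      refine ⟨x₀ + z, ?_⟩
      apply Prod.ext
      · show (coneG C B ψ hψ).d (Int.ofNat 0) (x₀ + z) = y.1
        rw [map_add, hx₀, hz1, add_zero]
      · show rhoG C B ψ hψ (x₀ + z) = y.2
        rw [map_add, hz2]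
        abel
    · rintro ⟨x, rfl⟩
      exact (Ecomplex C B ψ hψ s hs).comp_eq_zero (Int.ofNat 0) x
  | Int.ofNat (k+1) =>
    intro y
    constructor
    · intro hy
      have h1 : (coneG C B ψ hψ).d (Int.ofNat (k+2)) y.1 = 0 := congrArg Prod.fst hy
      have h2 : cP B (Int.ofNat (k+2)) y.2 = 0 := congrArg Prod.snd hy
      obtain ⟨x₁, hx₁⟩ := (hAcG (Int.ofNat (k+1)) y.1).mp h1
      by_cases he : Even (Int.ofNat (k+1))
      · refine ⟨(x₁, y.2), ?_⟩
        apply Prod.ext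
        · exact hx₁
        · show cP B (Int.ofNat (k+1)) y.2 = y.2
          rw [cP_even B he]; rfl
      · have he2 : Even (Int.ofNat (k+2)) :=
          (Int.even_add_one (n := Int.ofNat (k+1))).mpr he
        have hy2 : y.2 = 0 := by
          rw [cP_even B he2] at h2; exact h2
        refine ⟨(x₁, 0), ?_⟩
        apply Prod.ext
        · exact hx₁
        · show cP B (Int.ofNat (k+1)) (0 : ↥(B.P 0)) = y.2
          rw [hy2, map_zero]
    · rintro ⟨x, rfl⟩
      exact (Ecomplex C B ψ hψ s hs).comp_eq_zero (Int.ofNat (k+1)) x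
  | Int.negSucc 0 =>
    intro y
    constructor
    · intro hy
      have h1 : (coneG C B ψ hψ).d (Int.ofNat 0) y = 0 := congrArg Prod.fst hy
      have h2 : rhoG C B ψ hψ y = 0 := congrArg Prod.snd hy
      obtain ⟨x₀, hx₀⟩ := (hAcG (Int.negSucc 0) y).mp h1
      have htau : tauG C B ψ hψ x₀ = 0 := by
        show rhoG C B ψ hψ ((coneG C B ψ hψ).d (Int.negSucc 0) x₀) = 0
        rw [hx₀]; exact h2
      refine ⟨x₀, ?_⟩
      show (coneG C B ψ hψ).d (Int.negSucc 0) (x₀ - s (tauG C B ψ hψ x₀)) = y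
      rw [htau, map_zero, sub_zero, hx₀]
    · rintro ⟨x, rfl⟩
      exact (Ecomplex C B ψ hψ s hs).comp_eq_zero (Int.negSucc 0) x
  | Int.negSucc 1 =>
    have key : ∀ y : ↥((coneG C B ψ hψ).P (Int.negSucc 0)),
        deltaG C B ψ hψ s y = 0 →
        ∃ x : ↥(EP C B ψ hψ (Int.negSucc 1)), Ed C B ψ hψ s (Int.negSucc 1) x = y := by
      intro y hy
      obtain ⟨u, hu⟩ := (hAcG (Int.negSucc 1) (y - s (tauG C B ψ hψ y))).mp hy
      refine ⟨(u, tauG C B ψ hψ y), ?_⟩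
      show dGm2 C B ψ hψ u + s (tauG C B ψ hψ y) = y
      rw [show dGm2 C B ψ hψ u = y - s (tauG C B ψ hψ y) from hu]
      abel
    intro y
    constructor
    · intro hy
      exact key y hy
    · rintro ⟨x, rfl⟩
      exact (Ecomplex C B ψ hψ s hs).comp_eq_zero (Int.negSucc 1) x
  | Int.negSucc 2 =>
    intro y
    constructor
    · intro hy
      have hy' : dGm2 C B ψ hψ y.1 + s y.2 = 0 := hy
      have h2 : y.2 = 0 := by
        have := congrArg (tauG C B ψ hψ) hy'
        rw [map_add, tau_dG, zero_add, hs, map_zero] at this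
        exact this
      have h1 : dGm2 C B ψ hψ y.1 = 0 := by
        rw [h2, map_zero, add_zero] at hy'
        exact hy'
      obtain ⟨u, hu⟩ := (hAcG (Int.negSucc 2) y.1).mp h1
      refine ⟨(u, 0), ?_⟩
      apply Prod.ext
      · exact hu
      · show cP B (Int.negSucc 2) (0 : ↥(B.P 0)) = y.2
        rw [map_zero, h2]
    · rintro ⟨x, rfl⟩
      exact (Ecomplex C B ψ hψ s hs).comp_eq_zero (Int.negSucc 2) x
  | Int.negSucc (k+3) =>
    intro y
    constructor
    · intro hy
      have h1 : (coneG C B ψ hψ).d (Int.negSucc (k+2)) y.1 = 0 := congrArg Prod.fst hy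
      have h2 : cP B (Int.negSucc (k+2)) y.2 = 0 := congrArg Prod.snd hy
      obtain ⟨x₁, hx₁⟩ := (hAcG (Int.negSucc (k+3)) y.1).mp h1
      by_cases he : Even (Int.negSucc (k+3))
      · refine ⟨(x₁, y.2), ?_⟩
        apply Prod.ext
        · exact hx₁
        · show cP B (Int.negSucc (k+3)) y.2 = y.2
          rw [cP_even B he]; rfl
      · have he2 : Even (Int.negSucc (k+2)) :=
          (Int.even_add_one (n := Int.negSucc (k+3))).mpr he
        have hy2 : y.2 = 0 := by
          rw [cP_even B he2] at h2; exact h2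
        refine ⟨(x₁, 0), ?_⟩
        apply Prod.ext
        · exact hx₁
        · show cP B (Int.negSucc (k+3)) (0 : ↥(B.P 0)) = y.2
          rw [hy2, map_zero]
    · rintro ⟨x, rfl⟩
      exact (Ecomplex C B ψ hψ s hs).comp_eq_zero (Int.negSucc (k+3)) x

end EProps

section EDual

variable (C B : ZComplex RA) (ψ : ∀ n : ℤ, C.P n →ₗ[RA] B.P (n+1))
variable (hψ : ∀ n x, B.d (n+1) (ψ n x) = ψ (n+1) (C.d n x))
variable (s : ↥(B.P 0) →ₗ[RA] ↥((coneG C B ψ hψ).P (Int.negSucc 0)))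

lemma prod_split {X Y : Type u} [AddCommGroup X] [AddCommGroup Y] [Module RA X] [Module RA Y]
    (f : X × Y →ₗ[RA] RA) (z : X × Y) : f z = f (z.1, 0) + f (0, z.2) := by
  rw [← map_add]
  congr
  apply Prod.ext <;> simp

lemma E_dd (hs : ∀ p, tauG C B ψ hψ (s p) = p) (n : ℤ)
    (g : ↥((Ecomplex C B ψ hψ s hs).P (n+1+1)) →ₗ[RA] RA) :
    (g ∘ₗ (Ecomplex C B ψ hψ s hs).d (n+1)) ∘ₗ (Ecomplex C B ψ hψ s hs).d n = 0 :=
  LinearMap.ext fun z => by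
    simp only [LinearMap.comp_apply]
    rw [(Ecomplex C B ψ hψ s hs).comp_eq_zero n z]
    exact map_zero g

lemma E_dualAcyclic (hs : ∀ p, tauG C B ψ hψ (s p) = p)
    (hDuG : (coneG C B ψ hψ).DualAcyclic)
    (pSurj : ∀ p : ↥(B.P 0), ∃ y : ↥((coneG C B ψ hψ).P (Int.ofNat 0)),
      (coneG C B ψ hψ).d (Int.ofNat 0) y = 0 ∧ rhoG C B ψ hψ y = p) :
    (Ecomplex C B ψ hψ s hs).DualAcyclic := by
  intro n
  match n with
  | Int.negSucc 0 =>
    intro f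
    constructor
    · intro hf
      let fC : ↥((coneG C B ψ hψ).P (Int.ofNat 0)) →ₗ[RA] RA := f
      have hc : fC ∘ₗ deltaG C B ψ hψ s = 0 := hf
      set F : ↥((coneG C B ψ hψ).P (Int.negSucc 0)) →ₗ[RA] RA :=
        fC ∘ₗ (coneG C B ψ hψ).d (Int.negSucc 0) with hF
      set v : ↥(B.P 0) →ₗ[RA] RA := F ∘ₗ s with hv
      have hFv : ∀ x, F x = v (tauG C B ψ hψ x) := by
        intro x
        have h1 : fC (deltaG C B ψ hψ s x) = 0 := LinearMap.congr_fun hc x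
        rw [deltaG_apply, map_sub, map_sub] at h1
        exact sub_eq_zero.mp h1
      have hq : (fC - v ∘ₗ rhoG C B ψ hψ) ∘ₗ (coneG C B ψ hψ).d (Int.negSucc 0) = 0 := by
        apply LinearMap.ext
        intro x
        show fC ((coneG C B ψ hψ).d (Int.negSucc 0) x)
          - v (rhoG C B ψ hψ ((coneG C B ψ hψ).d (Int.negSucc 0) x)) = 0
        rw [rho_dG]
        rw [show fC ((coneG C B ψ hψ).d (Int.negSucc 0) x) = F x from rfl, hFv x]
        simp
      obtain ⟨h₁, hh₁⟩ := (hDuG (Int.negSucc 0) (fC - v ∘ₗ rhoG C B ψ hψ)).mp hq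
      have hh₁' : ∀ u, h₁ ((coneG C B ψ hψ).d (Int.negSucc 0 + 1) u)
          = (fC - v ∘ₗ rhoG C B ψ hψ) u := fun u => LinearMap.congr_fun hh₁ u
      refine ⟨h₁ ∘ₗ (LinearMap.fst RA ↥((coneG C B ψ hψ).P (Int.ofNat 1)) ↥(B.P 0))
        + v ∘ₗ (LinearMap.snd RA ↥((coneG C B ψ hψ).P (Int.ofNat 1)) ↥(B.P 0)), ?_⟩
      apply LinearMap.ext
      intro y
      show h₁ ((coneG C B ψ hψ).d (Int.negSucc 0 + 1) y) + v (rhoG C B ψ hψ y) = fC y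
      rw [hh₁' y]
      exact sub_add_cancel (fC y) (v (rhoG C B ψ hψ y))
    · rintro ⟨g, rfl⟩
      exact E_dd C B ψ hψ s hs (Int.negSucc 0) g
  | Int.ofNat 0 =>
    intro f
    constructor
    · intro hf
      have hc : f ∘ₗ Ed C B ψ hψ s (Int.ofNat 0) = 0 := hf
      have hc' : ∀ y, f (Ed C B ψ hψ s (Int.ofNat 0) y) = 0 :=
        fun y => LinearMap.congr_fun hc y
      set f₁ : ↥((coneG C B ψ hψ).P (Int.ofNat 1)) →ₗ[RA] RA :=
        f ∘ₗ (LinearMap.inl RA ↥((coneG C B ψ hψ).P (Int.ofNat 1)) ↥(B.P 0)) with hf₁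
      set f₂ : ↥(B.P 0) →ₗ[RA] RA :=
        f ∘ₗ (LinearMap.inr RA ↥((coneG C B ψ hψ).P (Int.ofNat 1)) ↥(B.P 0)) with hf₂
      have hsplit : ∀ z : ↥((coneG C B ψ hψ).P (Int.ofNat 1)) × ↥(B.P 0),
          f z = f₁ z.1 + f₂ z.2 := fun z => prod_split f z
      have hcond : ∀ y : ↥((coneG C B ψ hψ).P (Int.ofNat 0)),
          f₁ ((coneG C B ψ hψ).d (Int.ofNat 0) y) + f₂ (rhoG C B ψ hψ y) = 0 := by
        intro y
        have h0 := hc' y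
        rw [show f (Ed C B ψ hψ s (Int.ofNat 0) y)
            = f₁ ((coneG C B ψ hψ).d (Int.ofNat 0) y) + f₂ (rhoG C B ψ hψ y) from
          hsplit _] at h0
        exact h0
      have hf₂0 : f₂ = 0 := by
        apply LinearMap.ext
        intro p
        obtain ⟨y, hy1, hy2⟩ := pSurj p
        have := hcond y
        rw [hy1, map_zero, zero_add, hy2] at this
        exact this
      have hf₁d : f₁ ∘ₗ (coneG C B ψ hψ).d (Int.ofNat 0) = 0 := by
        apply LinearMap.ext
        intro y
        have := hcond y
        rw [LinearMap.congr_fun hf₂0 (rhoG C B ψ hψ y)] at this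
        simpa using this
      obtain ⟨h₁, hh₁⟩ := (hDuG (Int.ofNat 0) f₁).mp hf₁d
      have hh₁' : ∀ u, h₁ ((coneG C B ψ hψ).d (Int.ofNat 0 + 1) u) = f₁ u :=
        fun u => LinearMap.congr_fun hh₁ u
      refine ⟨h₁ ∘ₗ (LinearMap.fst RA ↥((coneG C B ψ hψ).P (Int.ofNat 2)) ↥(B.P 0)), ?_⟩
      apply LinearMap.ext
      intro z
      show h₁ ((coneG C B ψ hψ).d (Int.ofNat 0 + 1) z.1) = f z
      rw [hh₁' z.1, hsplit z, LinearMap.congr_fun hf₂0 z.2]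
      simp
    · rintro ⟨g, rfl⟩
      exact E_dd C B ψ hψ s hs (Int.ofNat 0) g
  | Int.negSucc 1 =>
    intro f
    constructor
    · intro hf
      let fC : ↥((coneG C B ψ hψ).P (Int.negSucc 0)) →ₗ[RA] RA := f
      have hc : fC ∘ₗ Ed C B ψ hψ s (Int.negSucc 1) = 0 := hf
      have hc' : ∀ z, fC (Ed C B ψ hψ s (Int.negSucc 1) z) = 0 :=
        fun z => LinearMap.congr_fun hc z
      have hfd : fC ∘ₗ (coneG C B ψ hψ).d (Int.negSucc 1) = 0 := by
        apply LinearMap.ext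
        intro y
        have h0 := hc' (y, 0)
        rw [show fC (Ed C B ψ hψ s (Int.negSucc 1) (y, 0))
          = fC (dGm2 C B ψ hψ y + s 0) from rfl, map_zero, add_zero] at h0
        exact h0
      have hfs : ∀ p, fC (s p) = 0 := by
        intro p
        have h0 := hc' (0, p)
        rw [show fC (Ed C B ψ hψ s (Int.negSucc 1) (0, p))
          = fC (dGm2 C B ψ hψ 0 + s p) from rfl, map_zero, zero_add] at h0
        exact h0
      obtain ⟨g, hg⟩ := (hDuG (Int.negSucc 1) fC).mp hfd
      have hg' : ∀ u, g ((coneG C B ψ hψ).d (Int.negSucc 1 + 1) u) = fC u :=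
        fun u => LinearMap.congr_fun hg u
      refine ⟨g, ?_⟩
      apply LinearMap.ext
      intro x
      let xC : ↥((coneG C B ψ hψ).P (Int.negSucc 0)) := x
      show g (deltaG C B ψ hψ s xC) = fC xC
      rw [deltaG_apply]
      rw [show g ((coneG C B ψ hψ).d (Int.negSucc 0) (xC - s (tauG C B ψ hψ xC)))
        = fC (xC - s (tauG C B ψ hψ xC)) from hg' _]
      rw [map_sub, hfs, sub_zero]
    · rintro ⟨g, rfl⟩
      exact E_dd C B ψ hψ s hs (Int.negSucc 1) g
  | Int.negSucc 2 =>
    intro f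
    constructor
    · intro hf
      have hc : f ∘ₗ Ed C B ψ hψ s (Int.negSucc 2) = 0 := hf
      have hc' : ∀ z, f (Ed C B ψ hψ s (Int.negSucc 2) z) = 0 :=
        fun z => LinearMap.congr_fun hc z
      set f₁ : ↥((coneG C B ψ hψ).P (Int.negSucc 1)) →ₗ[RA] RA :=
        f ∘ₗ (LinearMap.inl RA ↥((coneG C B ψ hψ).P (Int.negSucc 1)) ↥(B.P 0)) with hf₁
      set f₂ : ↥(B.P 0) →ₗ[RA] RA :=
        f ∘ₗ (LinearMap.inr RA ↥((coneG C B ψ hψ).P (Int.negSucc 1)) ↥(B.P 0)) with hf₂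
      have hsplit : ∀ z : ↥((coneG C B ψ hψ).P (Int.negSucc 1)) × ↥(B.P 0),
          f z = f₁ z.1 + f₂ z.2 := fun z => prod_split f z
      have hf₁d : f₁ ∘ₗ (coneG C B ψ hψ).d (Int.negSucc 2) = 0 := by
        apply LinearMap.ext
        intro y
        have h0 := hc' (y, 0)
        rw [show f (Ed C B ψ hψ s (Int.negSucc 2) (y, 0))
          = f₁ ((coneG C B ψ hψ).d (Int.negSucc 2) y) + f₂ (cP B (Int.negSucc 2) 0) from
          hsplit _, map_zero, map_zero, add_zero] at h0
        exact h0
      obtain ⟨g₀, hg₀⟩ := (hDuG (Int.negSucc 2) f₁).mp hf₁d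
      let g₀C : ↥((coneG C B ψ hψ).P (Int.negSucc 0)) →ₗ[RA] RA := g₀
      have hg₀' : ∀ u, g₀C ((coneG C B ψ hψ).d (Int.negSucc 2 + 1) u) = f₁ u :=
        fun u => LinearMap.congr_fun hg₀ u
      refine ⟨g₀C + (f₂ - g₀C ∘ₗ s) ∘ₗ tauG C B ψ hψ, ?_⟩
      apply LinearMap.ext
      intro z
      show (g₀C + (f₂ - g₀C ∘ₗ s) ∘ₗ tauG C B ψ hψ) (dGm2 C B ψ hψ z.1 + s z.2) = f z
      simp only [LinearMap.add_apply, LinearMap.comp_apply, LinearMap.sub_apply, map_add]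
      rw [tau_dG, hs]
      have hg₀'' : ∀ u, g₀C (dGm2 C B ψ hψ u) = f₁ u := hg₀'
      rw [hg₀'' z.1, hsplit z]
      simp only [map_zero]
      abel
    · rintro ⟨g, rfl⟩
      exact E_dd C B ψ hψ s hs (Int.negSucc 2) g
  | Int.ofNat (k+1) =>
    intro f
    constructor
    · intro hf
      have hc : f ∘ₗ Ed C B ψ hψ s (Int.ofNat (k+1)) = 0 := hf
      have hc' : ∀ z, f (Ed C B ψ hψ s (Int.ofNat (k+1)) z) = 0 :=
        fun z => LinearMap.congr_fun hc z
      set f₁ : ↥((coneG C B ψ hψ).P (Int.ofNat (k+2))) →ₗ[RA] RA :=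
        f ∘ₗ (LinearMap.inl RA ↥((coneG C B ψ hψ).P (Int.ofNat (k+2))) ↥(B.P 0)) with hf₁
      set f₂ : ↥(B.P 0) →ₗ[RA] RA :=
        f ∘ₗ (LinearMap.inr RA ↥((coneG C B ψ hψ).P (Int.ofNat (k+2))) ↥(B.P 0)) with hf₂
      have hsplit : ∀ z : ↥((coneG C B ψ hψ).P (Int.ofNat (k+2))) × ↥(B.P 0),
          f z = f₁ z.1 + f₂ z.2 := fun z => prod_split f z
      have hf₁d : f₁ ∘ₗ (coneG C B ψ hψ).d (Int.ofNat (k+1)) = 0 := by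
        apply LinearMap.ext
        intro y
        have h0 := hc' (y, 0)
        rw [show f (Ed C B ψ hψ s (Int.ofNat (k+1)) (y, 0))
          = f₁ ((coneG C B ψ hψ).d (Int.ofNat (k+1)) y) + f₂ (cP B (Int.ofNat (k+1)) 0) from
          hsplit _, map_zero, map_zero, add_zero] at h0
        exact h0
      have hf₂c : ∀ p, f₂ (cP B (Int.ofNat (k+1)) p) = 0 := by
        intro p
        have h0 := hc' (0, p)
        rw [show f (Ed C B ψ hψ s (Int.ofNat (k+1)) (0, p))
          = f₁ ((coneG C B ψ hψ).d (Int.ofNat (k+1)) 0) + f₂ (cP B (Int.ofNat (k+1)) p) from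
          hsplit _, map_zero, map_zero, zero_add] at h0
        exact h0
      obtain ⟨g₁, hg₁⟩ := (hDuG (Int.ofNat (k+1)) f₁).mp hf₁d
      have hg₁' : ∀ u, g₁ ((coneG C B ψ hψ).d (Int.ofNat (k+1) + 1) u) = f₁ u :=
        fun u => LinearMap.congr_fun hg₁ u
      by_cases he : Even (Int.ofNat (k+2))
      · refine ⟨g₁ ∘ₗ (LinearMap.fst RA ↥((coneG C B ψ hψ).P (Int.ofNat (k+3))) ↥(B.P 0))
          + f₂ ∘ₗ (LinearMap.snd RA ↥((coneG C B ψ hψ).P (Int.ofNat (k+3))) ↥(B.P 0)), ?_⟩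
        apply LinearMap.ext
        intro z
        show g₁ ((coneG C B ψ hψ).d (Int.ofNat (k+1) + 1) z.1)
            + f₂ (cP B (Int.ofNat (k+2)) z.2) = f z
        rw [hg₁' z.1, cP_even B he, hsplit z]
        rfl
      · have he1 : Even (Int.ofNat (k+1)) := by
          rcases Int.even_or_odd (Int.ofNat (k+1)) with h | h
          · exact h
          · exfalso
            exact he ((Int.even_add_one (n := Int.ofNat (k+1))).mpr
              (by rw [← Int.not_even_iff_odd] at h; exact h))
        have hf₂0 : f₂ = 0 := by
          apply LinearMap.ext
          intro p
          have := hf₂c p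
          rw [cP_even B he1] at this
          exact this
        refine ⟨g₁ ∘ₗ (LinearMap.fst RA ↥((coneG C B ψ hψ).P (Int.ofNat (k+3))) ↥(B.P 0)), ?_⟩
        apply LinearMap.ext
        intro z
        show g₁ ((coneG C B ψ hψ).d (Int.ofNat (k+1) + 1) z.1) = f z
        rw [hg₁' z.1, hsplit z, LinearMap.congr_fun hf₂0 z.2]
        simp
    · rintro ⟨g, rfl⟩
      exact E_dd C B ψ hψ s hs (Int.ofNat (k+1)) g
  | Int.negSucc (k+3) =>
    intro f
    constructor
    · intro hf
      have hc : f ∘ₗ Ed C B ψ hψ s (Int.negSucc (k+3)) = 0 := hf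
      have hc' : ∀ z, f (Ed C B ψ hψ s (Int.negSucc (k+3)) z) = 0 :=
        fun z => LinearMap.congr_fun hc z
      set f₁ : ↥((coneG C B ψ hψ).P (Int.negSucc (k+2))) →ₗ[RA] RA :=
        f ∘ₗ (LinearMap.inl RA ↥((coneG C B ψ hψ).P (Int.negSucc (k+2))) ↥(B.P 0)) with hf₁
      set f₂ : ↥(B.P 0) →ₗ[RA] RA :=
        f ∘ₗ (LinearMap.inr RA ↥((coneG C B ψ hψ).P (Int.negSucc (k+2))) ↥(B.P 0)) with hf₂
      have hsplit : ∀ z : ↥((coneG C B ψ hψ).P (Int.negSucc (k+2))) × ↥(B.P 0),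
          f z = f₁ z.1 + f₂ z.2 := fun z => prod_split f z
      have hf₁d : f₁ ∘ₗ (coneG C B ψ hψ).d (Int.negSucc (k+3)) = 0 := by
        apply LinearMap.ext
        intro y
        have h0 := hc' (y, 0)
        rw [show f (Ed C B ψ hψ s (Int.negSucc (k+3)) (y, 0))
          = f₁ ((coneG C B ψ hψ).d (Int.negSucc (k+3)) y) + f₂ (cP B (Int.negSucc (k+3)) 0) from
          hsplit _, map_zero, map_zero, add_zero] at h0
        exact h0
      have hf₂c : ∀ p, f₂ (cP B (Int.negSucc (k+3)) p) = 0 := by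
        intro p
        have h0 := hc' (0, p)
        rw [show f (Ed C B ψ hψ s (Int.negSucc (k+3)) (0, p))
          = f₁ ((coneG C B ψ hψ).d (Int.negSucc (k+3)) 0) + f₂ (cP B (Int.negSucc (k+3)) p) from
          hsplit _, map_zero, map_zero, zero_add] at h0
        exact h0
      obtain ⟨g₁, hg₁⟩ := (hDuG (Int.negSucc (k+3)) f₁).mp hf₁d
      have hg₁' : ∀ u, g₁ ((coneG C B ψ hψ).d (Int.negSucc (k+3) + 1) u) = f₁ u :=
        fun u => LinearMap.congr_fun hg₁ u
      by_cases he : Even (Int.negSucc (k+2))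
      · refine ⟨g₁ ∘ₗ (LinearMap.fst RA ↥((coneG C B ψ hψ).P (Int.negSucc (k+1))) ↥(B.P 0))
          + f₂ ∘ₗ (LinearMap.snd RA ↥((coneG C B ψ hψ).P (Int.negSucc (k+1))) ↥(B.P 0)), ?_⟩
        apply LinearMap.ext
        intro z
        show g₁ ((coneG C B ψ hψ).d (Int.negSucc (k+3) + 1) z.1)
            + f₂ (cP B (Int.negSucc (k+2)) z.2) = f z
        rw [hg₁' z.1, cP_even B he, hsplit z]
        rfl
      · have he1 : Even (Int.negSucc (k+3)) := by
          rcases Int.even_or_odd (Int.negSucc (k+3)) with h | h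
          · exact h
          · exfalso
            exact he ((Int.even_add_one (n := Int.negSucc (k+3))).mpr
              (by rw [← Int.not_even_iff_odd] at h; exact h))
        have hf₂0 : f₂ = 0 := by
          apply LinearMap.ext
          intro p
          have := hf₂c p
          rw [cP_even B he1] at this
          exact this
        refine ⟨g₁ ∘ₗ (LinearMap.fst RA ↥((coneG C B ψ hψ).P (Int.negSucc (k+1))) ↥(B.P 0)), ?_⟩
        apply LinearMap.ext
        intro z
        show g₁ ((coneG C B ψ hψ).d (Int.negSucc (k+3) + 1) z.1) = f z
        rw [hg₁' z.1, hsplit z, LinearMap.congr_fun hf₂0 z.2]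
        simp
    · rintro ⟨g, rfl⟩
      exact E_dd C B ψ hψ s hs (Int.negSucc (k+3)) g

end EDual

section ShiftNeg

lemma pcast_id (C : ZComplex RA) {n : ℤ} (h : n = n) (x : C.P n) : pcast C h x = x := rfl

lemma dd_zero (Z : ZComplex RA) (n : ℤ) (g : ↥(Z.P (n+1+1)) →ₗ[RA] RA) :
    (g ∘ₗ Z.d (n+1)) ∘ₗ Z.d n = 0 :=
  LinearMap.ext fun z => by
    simp only [LinearMap.comp_apply]
    rw [Z.comp_eq_zero n z]
    exact map_zero g

noncomputable def shiftNeg (D : ZComplex RA) : ZComplex RA where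
  P n := D.P (n - 1)
  d n := pcast D (by ring) ∘ₗ D.d (n - 1)
  comp_eq_zero := by
    intro n x
    show pcast D (by ring) (D.d (n + 1 - 1) (pcast D (by ring) (D.d (n - 1) x))) = 0
    rw [d_pcast, pcast_pcast, D.comp_eq_zero (n-1) x]
    simp

lemma shiftNeg_isProj (D : ZComplex RA) (h : D.IsProj) : (shiftNeg D).IsProj :=
  fun n => h (n - 1)

lemma shiftNeg_isFG (D : ZComplex RA) (h : D.IsFG) : (shiftNeg D).IsFG :=
  fun n => h (n - 1)

lemma shiftNeg_acyclic (D : ZComplex RA) (h : D.Acyclic) : (shiftNeg D).Acyclic := by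
  intro n y
  constructor
  · intro hy
    have h1 : D.d (n + 1 - 1) y = 0 := by
      have hy' : pcast D (by ring : (n + 1 - 1) + 1 = (n + 1) + 1 - 1) (D.d (n + 1 - 1) y) = 0 :=
        hy
      exact (pcast_eq_zero_iff D _ _).mp hy'
    have e'' : n + 1 - 1 = (n - 1) + 1 := by ring
    have h2 : D.d ((n-1)+1) (pcast D e'' y) = 0 := by
      exact (d_pcast D e'' y).trans ((pcast_eq_zero_iff D _ _).mpr h1)
    obtain ⟨x, hx⟩ := (h (n-1) (pcast D e'' y)).mp h2
    refine ⟨x, ?_⟩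
    show pcast D (by ring) (D.d (n - 1) x) = y
    rw [hx]; exact (pcast_pcast D e'' _ y).trans (pcast_id D _ y)
  · rintro ⟨x, rfl⟩
    exact (shiftNeg D).comp_eq_zero n x

lemma shiftNeg_dualAcyclic (D : ZComplex RA) (h : D.DualAcyclic) :
    (shiftNeg D).DualAcyclic := by
  intro n f
  constructor
  · intro hf
    have e' : (n - 1) + 1 = n + 1 - 1 := by ring
    have e'' : n + 1 - 1 = (n - 1) + 1 := by ring
    set f' : ↥(D.P ((n-1)+1)) →ₗ[RA] RA := f ∘ₗ pcast D e' with hf'def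
    have hf0 : f ∘ₗ (shiftNeg D).d n = 0 := hf
    have hf0' : ∀ x, f ((shiftNeg D).d n x) = 0 := fun x => LinearMap.congr_fun hf0 x
    have hf'd : f' ∘ₗ D.d (n-1) = 0 := by
      apply LinearMap.ext
      intro x
      show f (pcast D e' (D.d (n-1) x)) = 0
      exact hf0' x
    obtain ⟨g', hg'⟩ := (h (n-1) f').mp hf'd
    have hg'' : ∀ u, g' (D.d ((n-1)+1) u) = f' u := fun u => LinearMap.congr_fun hg' u
    have e2 : n + 1 + 1 - 1 = (n - 1) + 1 + 1 := by ring
    refine ⟨g' ∘ₗ pcast D e2, ?_⟩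
    apply LinearMap.ext
    intro y
    show g' (pcast D e2 (pcast D (by ring) (D.d (n + 1 - 1) y))) = f y
    rw [pcast_pcast]
    have step2 : g' (D.d ((n-1)+1) (pcast D e'' y)) = f y := by
      rw [hg'']
      show f (pcast D e' (pcast D e'' y)) = f y
      exact congrArg f ((pcast_pcast D e'' e' y).trans (pcast_id D _ y))
    exact (congrArg g' (d_pcast D e'' y)).symm.trans step2
  · rintro ⟨g, rfl⟩
    exact dd_zero (shiftNeg D) n g

end ShiftNeg

section KeyLemma

/-- Master construction: given totally acyclic complexes C, B, a degree-one chain map ψ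
whose 0-cocycle map is "onto the 1-cocycles of B", the kernel of the induced map on
cocycles is Gorenstein projective. -/
lemma key (C B : ZComplex RA)
    (hAcC : C.Acyclic) (hDuC : C.DualAcyclic) (hPC : C.IsProj) (hFC : C.IsFG)
    (hAcB : B.Acyclic) (hDuB : B.DualAcyclic) (hPB : B.IsProj) (hFB : B.IsFG)
    (ψ : ∀ n : ℤ, C.P n →ₗ[RA] B.P (n+1))
    (hψ : ∀ n x, B.d (n+1) (ψ n x) = ψ (n+1) (C.d n x))
    (γsurj : ∀ w : ↥(B.P 1), B.d 1 w = 0 → ∃ c : ↥(C.P 0), C.d 0 c = 0 ∧ ψ 0 c = w)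
    (N : Type u) [AddCommGroup N] [Module RA N]
    (eN : Nonempty (↥(LinearMap.ker ((C.d 0).prod (ψ 0))) ≃ₗ[RA] N)) :
    IsGProj RA N := by
  have hAcG := coneG_acyclic C B ψ hψ hAcC hAcB
  have hDuG := coneG_dualAcyclic C B ψ hψ hDuC hDuB
  -- surjectivity of rho on 0-cocycles of G
  have pSurj : ∀ p : ↥(B.P 0), ∃ y : ↥((coneG C B ψ hψ).P (Int.ofNat 0)),
      (coneG C B ψ hψ).d (Int.ofNat 0) y = 0 ∧ rhoG C B ψ hψ y = p := by
    intro p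
    have hw : B.d 1 (B.d 0 p) = 0 := B.comp_eq_zero 0 p
    obtain ⟨c, hc1, hc2⟩ := γsurj (B.d 0 p) hw
    refine ⟨(c, p), ?_, rfl⟩
    apply Prod.ext
    · exact hc1
    · show ψ 0 c - B.d 0 p = 0
      rw [hc2]; simp
  -- surjectivity of tau
  have tauSurj : Function.Surjective (tauG C B ψ hψ) := by
    intro p
    obtain ⟨y, hy1, hy2⟩ := pSurj p
    obtain ⟨x, hx⟩ := (hAcG (Int.negSucc 0) y).mp hy1
    refine ⟨x, ?_⟩
    show rhoG C B ψ hψ ((coneG C B ψ hψ).d (Int.negSucc 0) x) = p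
    rw [hx]
    exact hy2
  -- the section s of tau
  haveI := hPB 0
  obtain ⟨s, hs0⟩ := Module.projective_lifting_property (tauG C B ψ hψ) LinearMap.id tauSurj
  have hs : ∀ p, tauG C B ψ hψ (s p) = p := fun p => LinearMap.congr_fun hs0 p
  -- the kernel identification
  have hker : ∀ z : ↥((Ecomplex C B ψ hψ s hs).P (Int.ofNat 0)),
      z ∈ LinearMap.ker ((Ecomplex C B ψ hψ s hs).d (Int.ofNat 0)) ↔
      (C.d 0 z.1 = 0 ∧ ψ 0 z.1 = 0 ∧ z.2 = 0) := by
    intro z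
    constructor
    · intro hz
      have hz' : Ed C B ψ hψ s (Int.ofNat 0) z = 0 := hz
      have h1 : (coneG C B ψ hψ).d (Int.ofNat 0) z = 0 := congrArg Prod.fst hz'
      have h2 : z.2 = 0 := congrArg Prod.snd hz'
      have h11 : C.d 0 z.1 = 0 := congrArg Prod.fst h1
      have h12 : ψ 0 z.1 - B.d 0 z.2 = 0 := congrArg Prod.snd h1
      rw [h2, map_zero, sub_zero] at h12
      exact ⟨h11, h12, h2⟩
    · rintro ⟨h1, h2, h3⟩
      show Ed C B ψ hψ s (Int.ofNat 0) z = 0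
      apply Prod.ext
      · show (coneG C B ψ hψ).d (Int.ofNat 0) z = 0
        apply Prod.ext
        · exact h1
        · show ψ 0 z.1 - B.d 0 z.2 = 0
          rw [h2, h3, map_zero, sub_zero]
      · exact h3
  -- fwd and bwd maps
  let K1 := LinearMap.ker ((Ecomplex C B ψ hψ s hs).d (Int.ofNat 0))
  let K2 := LinearMap.ker ((C.d 0).prod (ψ 0))
  let fwd0 : ↥K1 →ₗ[RA] ↥(C.P 0) :=
    (LinearMap.fst RA ↥(C.P 0) ↥(B.P 0)) ∘ₗ (Submodule.subtype K1)
  have fwd_mem : ∀ z : ↥K1, fwd0 z ∈ K2 := by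
    intro z
    obtain ⟨h1, h2, h3⟩ := (hker z.val).mp z.property
    show ((C.d 0) (z.val.1), (ψ 0) (z.val.1)) = 0
    apply Prod.ext
    · exact h1
    · exact h2
  let fwd : ↥K1 →ₗ[RA] ↥K2 := fwd0.codRestrict K2 fwd_mem
  let bwd0 : ↥K2 →ₗ[RA] ↥((Ecomplex C B ψ hψ s hs).P (Int.ofNat 0)) :=
    ((LinearMap.id (R := RA) (M := ↥(C.P 0))).prod 0) ∘ₗ (Submodule.subtype K2)
  have bwd_mem : ∀ c : ↥K2, bwd0 c ∈ K1 := by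
    intro c
    have hc1 : C.d 0 c.val = 0 := congrArg Prod.fst c.property
    have hc2 : ψ 0 c.val = 0 := congrArg Prod.snd c.property
    apply (hker _).mpr
    exact ⟨hc1, hc2, rfl⟩
  let bwd : ↥K2 →ₗ[RA] ↥K1 := bwd0.codRestrict K1 bwd_mem
  have h_fb : ∀ c : ↥K2, fwd (bwd c) = c := by
    intro c
    apply Subtype.ext
    rfl
  have h_bf : ∀ z : ↥K1, bwd (fwd z) = z := by
    intro z
    apply Subtype.ext
    obtain ⟨h1, h2, h3⟩ := (hker z.val).mp z.property
    show ((z.val.1 : ↥(C.P 0)), (0 : ↥(B.P 0))) = z.val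
    apply Prod.ext
    · rfl
    · exact h3.symm
  let equiv : ↥K1 ≃ₗ[RA] ↥K2 :=
    LinearEquiv.ofLinear fwd bwd (LinearMap.ext h_fb) (LinearMap.ext h_bf)
  obtain ⟨e2⟩ := eN
  exact ⟨Ecomplex C B ψ hψ s hs,
    E_isProj C B ψ hψ s hs hPC hPB,
    E_isFG C B ψ hψ s hs hFC hFB,
    E_acyclic C B ψ hψ s hs hAcG pSurj,
    E_dualAcyclic C B ψ hψ s hs hDuG pSurj,
    ⟨equiv.trans e2⟩⟩

end KeyLemma

end Stmt7Aux

/-- in a short exact sequence `0 → N → M → L → 0` of finitely generated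
modules, if `M` and `L` are Gorenstein-projective then so is `N`. -/
theorem stmt_7 (R : Type u) [CommRing R] [IsArtinianRing R] [Algebra R A] [Module.Finite R A]
    (N M L : Type u) [AddCommGroup N] [Module A N] [Module.Finite A N]
    [AddCommGroup M] [Module A M] [Module.Finite A M]
    [AddCommGroup L] [Module A L] [Module.Finite A L]
    (f : N →ₗ[A] M) (g : M →ₗ[A] L)
    (hf : Function.Injective f) (hg : Function.Surjective g) (hfg : Function.Exact f g)
    (hM : IsGProj A M) (hL : IsGProj A L) :
    IsGProj A N := by
  classical
  obtain ⟨C, hCP, hCF, hCAc, hCDu, ⟨eM⟩⟩ := hM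
  obtain ⟨D, hDP, hDF, hDAc, hDDu, ⟨eL⟩⟩ := hL
  set B := Stmt7Aux.shiftNeg D with hB
  have hBAc := Stmt7Aux.shiftNeg_acyclic D hDAc
  have hBDu := Stmt7Aux.shiftNeg_dualAcyclic D hDDu
  have hBP := Stmt7Aux.shiftNeg_isProj D hDP
  have hBF := Stmt7Aux.shiftNeg_isFG D hDF
  -- the comparison map on 0-cocycles
  let γ : ↥(LinearMap.ker (C.d 0)) →ₗ[A] ↥(B.P 1) :=
    (Submodule.subtype (LinearMap.ker (D.d 0))) ∘ₗ (eL.symm.toLinearMap) ∘ₗ g ∘ₗ (eM.toLinearMap)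
  have hγmem : ∀ z, D.d 0 (γ z) = 0 := fun z => (eL.symm (g (eM z))).2
  have hγ : ∀ z, B.d 1 (γ z) = 0 := by
    intro z
    show Stmt7Aux.pcast D (by ring : (1:ℤ) - 1 + 1 = 1 + 1 - 1) (D.d (1 - 1) (γ z)) = 0
    rw [Stmt7Aux.pcast_eq_zero_iff]
    exact hγmem z
  obtain ⟨ψ, hψchain, hψ0⟩ :=
    Stmt7Aux.exists_chain_map hCAc hCDu hCP hBAc hBP hBF γ hγ
  have γsurj : ∀ w : ↥(B.P 1), B.d 1 w = 0 → ∃ c : ↥(C.P 0), C.d 0 c = 0 ∧ ψ 0 c = w := by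
    intro w hw
    have hw' : D.d 0 w = 0 := by
      have h0 : Stmt7Aux.pcast D (by ring : (1:ℤ) - 1 + 1 = 1 + 1 - 1) (D.d (1 - 1) w) = 0 := hw
      exact (Stmt7Aux.pcast_eq_zero_iff D _ _).mp h0
    obtain ⟨m, hm⟩ := hg (eL ⟨w, hw'⟩)
    refine ⟨(eM.symm m).val, (eM.symm m).2, ?_⟩
    rw [hψ0 (eM.symm m).val (eM.symm m).2]
    show ((LinearMap.ker (D.d 0)).subtype) (eL.symm (g (eM (eM.symm m)))) = w
    rw [LinearEquiv.apply_symm_apply, hm, LinearEquiv.symm_apply_apply]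
    rfl
  -- identification of the kernel with N
  have hθmem : ∀ n : N, (eM.symm (f n)).val ∈ LinearMap.ker ((C.d 0).prod (ψ 0)) := by
    intro n
    have h1 : C.d 0 (eM.symm (f n)).val = 0 := (eM.symm (f n)).2
    have h2 : ψ 0 (eM.symm (f n)).val = 0 := by
      rw [hψ0 (eM.symm (f n)).val (eM.symm (f n)).2]
      show ((LinearMap.ker (D.d 0)).subtype) (eL.symm (g (eM (eM.symm (f n))))) = 0
      rw [LinearEquiv.apply_symm_apply, hfg.apply_apply_eq_zero n, map_zero]
      rfl
    show ((C.d 0) (eM.symm (f n)).val, (ψ 0) (eM.symm (f n)).val) = 0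
    apply Prod.ext
    · exact h1
    · exact h2
  let θ : N →ₗ[A] ↥(LinearMap.ker ((C.d 0).prod (ψ 0))) :=
    LinearMap.codRestrict _
      ((Submodule.subtype _) ∘ₗ (eM.symm.toLinearMap) ∘ₗ f) hθmem
  have θinj : Function.Injective θ := by
    intro a b hab
    have h0 : (θ a).val = (θ b).val := Subtype.ext_iff.mp hab
    have h1 : (eM.symm (f a)).val = (eM.symm (f b)).val := h0
    have h2 : eM.symm (f a) = eM.symm (f b) := Subtype.ext h1
    have h3 : f a = f b := eM.symm.injective h2
    exact hf h3
  have θsurj : Function.Surjective θ := by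
    rintro ⟨c, hc⟩
    have hc' : ((C.d 0) c, (ψ 0) c) = 0 := hc
    have hc1 : C.d 0 c = 0 := congrArg Prod.fst hc'
    have hc2 : ψ 0 c = 0 := congrArg Prod.snd hc'
    have hz : c ∈ LinearMap.ker (C.d 0) := hc1
    have h5 : γ ⟨c, hz⟩ = 0 := by
      rw [← hψ0 c hz]
      exact hc2
    have h5' : ((LinearMap.ker (D.d 0)).subtype) (eL.symm (g (eM ⟨c, hz⟩))) = 0 := h5
    have h6 : eL.symm (g (eM ⟨c, hz⟩)) = 0 := Subtype.ext h5'
    have h7 : g (eM ⟨c, hz⟩) = 0 := by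
      have := congrArg eL h6
      rw [LinearEquiv.apply_symm_apply, map_zero] at this
      exact this
    obtain ⟨n, hn⟩ := (hfg (eM ⟨c, hz⟩)).mp h7
    refine ⟨n, ?_⟩
    apply Subtype.ext
    show (eM.symm (f n)).val = c
    rw [hn, LinearEquiv.symm_apply_apply]
  exact Stmt7Aux.key C B hCAc hCDu hCP hCF hBAc hBDu hBP hBF ψ hψchain γsurj N
    ⟨(LinearEquiv.ofBijective θ ⟨θinj, θsurj⟩).symm⟩
end
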